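/- arXiv:2203.02326 — 9 statements merged into one kernel-verified Lean document; each statement's English description precedes it below -/
import Mathlib

section
/- Let a > b + 1, 0 ≤ b ≤ 1, λ = (a + √(a² − 4b))/2, and σ ∈ {−1, +1}. Let A_σ be the 2×2 matrix with rows (−σa, −b) and (1, 0) (the derivative of the affine branch Λ_σ of the Lozi map). If v = (x, y) ∈ ℝ² satisfies |y| ≤ |x|/λ (v lies in the universal unstable cone K^U), then A_σ·v ∈ K^U and ‖A_σ·v‖ ≥ λ‖v‖ in the sup-norm (equivalently in any L^n norm, n ∈ {1, 2, ∞}). -/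
theorem lozi_universal_unstable_cone (a b : ℝ) (hab : a > b + 1) (hb0 : 0 ≤ b) (hb1 : b ≤ 1)
    (σ : ℝ) (hσ : σ = -1 ∨ σ = 1) (x y : ℝ) :
    let l := (a + Real.sqrt (a ^ 2 - 4 * b)) / 2
    let A : Matrix (Fin 2) (Fin 2) ℝ := !![-σ * a, -b; 1, 0]
    let w := A.mulVec ![x, y]
    |y| ≤ |x| / l →
      |w 1| ≤ |w 0| / l ∧ l * max |x| |y| ≤ max |w 0| |w 1| := by
  intro l A w hy
  have ha : (1:ℝ) < a := by linarith
  have hdisc : (0:ℝ) ≤ a ^ 2 - 4 * b := by nlinarith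
  set s := Real.sqrt (a ^ 2 - 4 * b) with hs_def
  have hs0 : 0 ≤ s := Real.sqrt_nonneg _
  have hs2 : s ^ 2 = a ^ 2 - 4 * b := Real.sq_sqrt hdisc
  have hl1 : 1 < l := by
    show (1:ℝ) < (a + s) / 2
    nlinarith [sq_nonneg (s + (2 - a)), sq_nonneg (s - (2 - a))]
  have hl0 : 0 < l := by linarith
  have hl2 : l ^ 2 = a * l - b := by
    show ((a + s) / 2) ^ 2 = a * ((a + s) / 2) - b
    nlinarith
  have hw0 : w 0 = -σ * a * x + -b * y := by
    simp [w, A, Matrix.mulVec, dotProduct, Fin.sum_univ_two]; ring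
  have hw1 : w 1 = x := by
    simp [w, A, Matrix.mulVec, dotProduct, Fin.sum_univ_two]
  have hσ1 : |σ| = 1 := by rcases hσ with h | h <;> simp [h]
  have h1 : |(-σ * a * x + -b * y) + b * y| ≤ |(-σ * a * x + -b * y)| + |b * y| :=
    abs_add_le _ _
  have h2 : (-σ * a * x + -b * y) + b * y = -σ * a * x := by ring
  have h3 : |(-σ * a * x)| = a * |x| := by
    rw [show -σ * a * x = -(σ * (a * x)) by ring, abs_neg, abs_mul, hσ1, one_mul,
      abs_mul, abs_of_pos (by linarith : (0:ℝ) < a)]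
  have h4 : |b * y| = b * |y| := by rw [abs_mul, abs_of_nonneg hb0]
  have habs : a * |x| - b * |y| ≤ |w 0| := by
    rw [hw0]; rw [h2, h3, h4] at h1; linarith
  have hly : l * |y| ≤ |x| := by
    rw [div_eq_mul_inv] at hy
    calc l * |y| ≤ l * (|x| * l⁻¹) := by
          exact mul_le_mul_of_nonneg_left hy (le_of_lt hl0)
      _ = |x| := by field_simp
  have hkey : l * |x| ≤ |w 0| := by
    nlinarith [abs_nonneg x, abs_nonneg y, abs_nonneg (w 0)]
  constructor
  · rw [hw1, le_div_iff₀ hl0]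
    calc |x| * l = l * |x| := by ring
      _ ≤ |w 0| := hkey
  · have hmax : max |x| |y| = |x| := by
      apply max_eq_left
      nlinarith [abs_nonneg x, abs_nonneg y]
    rw [hmax]
    exact hkey.trans (le_max_left _ _)
end

section
/- Let a > b + 1, 0 ≤ b ≤ 1, λ = (a + √(a² − 4b))/2, μ = b/λ, and σ ∈ {−1, +1}. Let A_σ = [[−σa, −b],[1, 0]] and suppose b > 0 so that A_σ is invertible. If v = (x, y) ∈ ℝ² satisfies |x| ≤ (b/λ)|y| (v lies in the universal stable cone K^S), then A_σ⁻¹·v ∈ K^S and ‖v‖ ≤ μ‖A_σ⁻¹·v‖ in the sup-norm. -/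
theorem lozi_universal_stable_cone (a b : ℝ) (hab : a > b + 1) (hb0 : 0 < b) (hb1 : b ≤ 1)
    (σ : ℝ) (hσ : σ = -1 ∨ σ = 1) (x y : ℝ) :
    let l := (a + Real.sqrt (a ^ 2 - 4 * b)) / 2
    let μ := b / l
    let A : Matrix (Fin 2) (Fin 2) ℝ := !![-σ * a, -b; 1, 0]
    let w := A⁻¹.mulVec ![x, y]
    |x| ≤ (b / l) * |y| →
      |w 0| ≤ (b / l) * |w 1| ∧ max |x| |y| ≤ μ * max |w 0| |w 1| := by
  intro l μ A w h
  have hσ1 : |σ| = 1 := by rcases hσ with h1 | h1 <;> simp [h1]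
  have ha : a > 1 := by linarith
  have hd : (0:ℝ) ≤ a ^ 2 - 4 * b := by nlinarith
  have hsq : Real.sqrt (a ^ 2 - 4 * b) ≥ a - 2 := by
    have h1 : Real.sqrt ((a - 2) ^ 2) ≤ Real.sqrt (a ^ 2 - 4 * b) := by
      apply Real.sqrt_le_sqrt; nlinarith
    have h2 : Real.sqrt ((a - 2) ^ 2) = |a - 2| := by
      rw [Real.sqrt_sq_eq_abs]
    calc a - 2 ≤ |a - 2| := le_abs_self _
      _ ≤ Real.sqrt (a ^ 2 - 4 * b) := by rw [← h2]; exact h1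
  have hlb : b < l := by
    have : l ≥ a - 1 := by
      show (a + Real.sqrt (a ^ 2 - 4 * b)) / 2 ≥ a - 1
      linarith
    linarith
  have hl0 : 0 < l := lt_trans hb0 hlb
  have hl2 : l ^ 2 - a * l + b = 0 := by
    have : Real.sqrt (a ^ 2 - 4 * b) ^ 2 = a ^ 2 - 4 * b := Real.sq_sqrt hd
    show ((a + Real.sqrt (a ^ 2 - 4 * b)) / 2) ^ 2 - a * ((a + Real.sqrt (a ^ 2 - 4 * b)) / 2) + b = 0
    nlinarith [this]
  have hbne : b ≠ 0 := ne_of_gt hb0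
  have hAinv : A⁻¹ = !![0, 1; -1/b, -σ * a / b] := by
    apply Matrix.inv_eq_right_inv
    ext i j
    fin_cases i <;> fin_cases j <;>
      simp [A, Matrix.mul_apply, Fin.sum_univ_two] <;> field_simp <;> ring
  have hw0 : w 0 = y := by
    show (A⁻¹.mulVec ![x, y]) 0 = y
    rw [hAinv]
    simp [Matrix.mulVec, dotProduct, Fin.sum_univ_two]
  have hw1 : w 1 = -(x + σ * a * y) / b := by
    show (A⁻¹.mulVec ![x, y]) 1 = -(x + σ * a * y) / b
    rw [hAinv]
    simp [Matrix.mulVec, dotProduct, Fin.sum_univ_two]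
    field_simp
    ring
  have habsw1 : |w 1| = |x + σ * a * y| / b := by
    rw [hw1, abs_div, abs_neg, abs_of_pos hb0]
  -- key inequality : l * |y| ≤ |x + σ a y|
  have hkey : l * |y| ≤ |x + σ * a * y| := by
    have h1 : |σ * a * y| = a * |y| := by
      rw [abs_mul, abs_mul, hσ1, abs_of_pos (by linarith : (0:ℝ) < a)]; ring
    have h2 : |σ * a * y| - |x| ≤ |x + σ * a * y| := by
      have := abs_sub_abs_le_abs_sub (σ * a * y) (-x)
      simp only [abs_neg, sub_neg_eq_add] at this
      calc |σ * a * y| - |x| ≤ |σ * a * y + x| := this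
        _ = |x + σ * a * y| := by ring_nf
    have h3 : l * |y| ≤ a * |y| - (b / l) * |y| := by
      have hy : 0 ≤ |y| := abs_nonneg y
      have : l = a - b / l := by field_simp; nlinarith [hl2]
      nlinarith [this]
    linarith [h1, h2, h3]
  have hmain : |y| ≤ (b / l) * |w 1| := by
    rw [habsw1]
    have heq : b / l * (|x + σ * a * y| / b) = |x + σ * a * y| / l := by
      field_simp
    rw [heq, le_div_iff₀ hl0]
    linarith [hkey]
  constructor
  · rw [hw0]; exact hmain
  · have hbl1 : b / l ≤ 1 := by
      rw [div_le_one hl0]; linarith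
    have hxy : |x| ≤ |y| := by
      calc |x| ≤ (b / l) * |y| := h
        _ ≤ 1 * |y| := by
            apply mul_le_mul_of_nonneg_right hbl1 (abs_nonneg y)
        _ = |y| := one_mul _
    have hmaxl : max |x| |y| = |y| := max_eq_right hxy
    have hw0le : |w 0| ≤ μ * |w 1| := by rw [hw0]; exact hmain
    have hmaxr : max |w 0| |w 1| = |w 1| ∨ μ * max |w 0| |w 1| ≥ μ * |w 1| := by
      left
      apply max_eq_right
      calc |w 0| ≤ μ * |w 1| := hw0le
        _ ≤ 1 * |w 1| := by
            apply mul_le_mul_of_nonneg_right hbl1 (abs_nonneg _)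
        _ = |w 1| := one_mul _
    rw [hmaxl]
    rcases hmaxr with hm | hm
    · rw [hm]; exact hmain
    · exact le_trans hmain hm
end

section
/- Suppose a > b + 1 and 0 ≤ b ≤ 1 and let I = (I₁, …, I_M) be a finite word in {−1, +1}. Let Λ_I be the composition Λ_{I_M} ∘ ⋯ ∘ Λ_{I₁} of the affine branches Λ_σ(x,y) = (−σax − by + (a−b−1), x). Then the linear part A = DΛ_I satisfies ‖Aᵐ v‖ ≥ λ^{Mm}‖v‖ for every m ≥ 0 and every v in the universal unstable cone K^U; in particular the spectral radius of A is at least λ^M, where λ = (a + √(a² − 4b))/2. -/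
attribute [local instance] Matrix.linftyOpNormedRing Matrix.linftyOpNormedAlgebra

noncomputable local instance : CompleteSpace (Matrix (Fin 2) (Fin 2) ℂ) :=
  FiniteDimensional.complete ℂ _

theorem lozi_word_expansion_and_spectral_radius (a b : ℝ) (hab : a > b + 1) (hb0 : 0 ≤ b)
    (hb1 : b ≤ 1) (I : List ℝ) (hI : ∀ σ ∈ I, σ = -1 ∨ σ = 1) (hlen : 1 ≤ I.length) :
    let l := (a + Real.sqrt (a ^ 2 - 4 * b)) / 2
    let A : Matrix (Fin 2) (Fin 2) ℝ :=
      (I.reverse.map (fun σ => !![-σ * a, -b; 1, 0])).prod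
    (∀ m : ℕ, ∀ v : Fin 2 → ℝ, |v 1| ≤ |v 0| / l →
      l ^ (I.length * m) * max |v 0| |v 1| ≤
        max |((A ^ m).mulVec v) 0| |((A ^ m).mulVec v) 1|) ∧
    (∃ ν : ℂ, ν ∈ spectrum ℂ (A.map (Complex.ofReal : ℝ → ℂ)) ∧
      l ^ I.length ≤ ‖ν‖) := by
  intro l A
  set s : ℝ := Real.sqrt (a ^ 2 - 4 * b) with hs_def
  have ha1 : 1 < a := by linarith
  have hd : (0:ℝ) ≤ a ^ 2 - 4 * b := by nlinarith
  have hs0 : 0 ≤ s := Real.sqrt_nonneg _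
  have hs2 : s ^ 2 = a ^ 2 - 4 * b := Real.sq_sqrt hd
  have hsgt : 1 - b < s := by nlinarith [sq_nonneg (s - (1 - b)), sq_nonneg (s + (1 - b))]
  have hl1 : 1 < l := by
    show (1:ℝ) < (a + s) / 2
    linarith
  have hl0 : 0 < l := by linarith
  have hkey : a * l - b = l * l := by
    show a * ((a + s)/2) - b = ((a + s)/2) * ((a + s)/2)
    nlinarith [hs2]
  -- single step lemma
  have hstep : ∀ σ : ℝ, (σ = -1 ∨ σ = 1) → ∀ v : Fin 2 → ℝ, |v 1| ≤ |v 0| / l →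
      (|((!![-σ * a, -b; 1, 0]).mulVec v) 1| ≤ |((!![-σ * a, -b; 1, 0]).mulVec v) 0| / l ∧
        l * max |v 0| |v 1| ≤
          max |((!![-σ * a, -b; 1, 0]).mulVec v) 0| |((!![-σ * a, -b; 1, 0]).mulVec v) 1|) := by
    intro σ hσ v hv
    have h0 : ((!![-σ * a, -b; 1, 0]).mulVec v) 0 = -σ * a * v 0 + -b * v 1 := by
      simp [Matrix.mulVec, dotProduct, Fin.sum_univ_two, Matrix.vecHead, Matrix.vecTail]
    have h1 : ((!![-σ * a, -b; 1, 0]).mulVec v) 1 = v 0 := by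
      simp [Matrix.mulVec, dotProduct, Fin.sum_univ_two, Matrix.vecHead, Matrix.vecTail]
    have habsσ : |σ| = 1 := by rcases hσ with h | h <;> simp [h]
    have hx0 : 0 ≤ |v 0| := abs_nonneg _
    have hy0 : 0 ≤ |v 1| := abs_nonneg _
    have hax : |(-σ * a) * v 0| = a * |v 0| := by
      rw [abs_mul, abs_mul, abs_neg, habsσ]
      rw [abs_of_pos (by linarith : (0:ℝ) < a)]
      ring
    have hby : |(-b) * v 1| = b * |v 1| := by
      rw [abs_mul, abs_neg, abs_of_nonneg hb0]
    have htri : |(-σ * a) * v 0| - |(-b) * v 1| ≤ |(-σ * a) * v 0 + (-b) * v 1| := by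
      have := abs_add_le ((-σ * a) * v 0 + (-b) * v 1) (-((-b) * v 1))
      simp only [abs_neg] at this
      calc |(-σ * a) * v 0| - |(-b) * v 1|
          = |(-σ * a) * v 0 + (-b) * v 1 + -((-b) * v 1)| - |(-b) * v 1| := by ring_nf
        _ ≤ |(-σ * a) * v 0 + (-b) * v 1| := by linarith
    have hbyx : b * |v 1| ≤ b / l * |v 0| := by
      have : b * |v 1| ≤ b * (|v 0| / l) := by
        exact mul_le_mul_of_nonneg_left hv hb0
      calc b * |v 1| ≤ b * (|v 0| / l) := this
        _ = b / l * |v 0| := by ring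
    have hlx : l * |v 0| ≤ |(-σ * a) * v 0 + (-b) * v 1| := by
      have hll : l * |v 0| = (a - b / l) * |v 0| := by
        have : a - b / l = l := by field_simp; linarith [hkey]
        rw [this]
      rw [hll]
      have : (a - b / l) * |v 0| ≤ a * |v 0| - b * |v 1| := by nlinarith [hbyx]
      linarith [htri, hax, hby, this]
    have hE : l * |v 0| ≤ |((!![-σ * a, -b; 1, 0]).mulVec v) 0| := by
      rw [h0]
      have : (-σ * a) * v 0 + (-b) * v 1 = -σ * a * v 0 + -b * v 1 := by ring
      rw [← this]
      exact hlx
    constructor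
    · rw [h1, le_div_iff₀ hl0]
      calc |v 0| * l = l * |v 0| := by ring
        _ ≤ _ := hE
    · have hmax : max |v 0| |v 1| = |v 0| := by
        apply max_eq_left
        calc |v 1| ≤ |v 0| / l := hv
          _ ≤ |v 0| := by
            rw [div_le_iff₀ hl0]
            nlinarith
      rw [hmax]
      calc l * |v 0| ≤ |((!![-σ * a, -b; 1, 0]).mulVec v) 0| := hE
        _ ≤ _ := le_max_left _ _
  -- word lemma
  have hword : ∀ J : List ℝ, (∀ σ ∈ J, σ = -1 ∨ σ = 1) → ∀ v : Fin 2 → ℝ,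
      |v 1| ≤ |v 0| / l →
      (|(((J.reverse.map (fun σ => !![-σ * a, -b; 1, 0])).prod).mulVec v) 1| ≤
          |(((J.reverse.map (fun σ => !![-σ * a, -b; 1, 0])).prod).mulVec v) 0| / l ∧
        l ^ J.length * max |v 0| |v 1| ≤
          max |(((J.reverse.map (fun σ => !![-σ * a, -b; 1, 0])).prod).mulVec v) 0|
            |(((J.reverse.map (fun σ => !![-σ * a, -b; 1, 0])).prod).mulVec v) 1|) := by
    intro J
    induction J with
    | nil =>
      intro _ v hv
      simp only [List.reverse_nil, List.map_nil, List.prod_nil, Matrix.one_mulVec,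
        List.length_nil, pow_zero, one_mul]
      exact ⟨hv, le_refl _⟩
    | cons σ T ih =>
      intro hJ v hv
      have hprod : (((σ :: T).reverse.map (fun σ => !![-σ * a, -b; 1, 0])).prod)
          = ((T.reverse.map (fun σ => !![-σ * a, -b; 1, 0])).prod) * !![-σ * a, -b; 1, 0] := by
        simp [List.reverse_cons, List.map_append, List.prod_append]
      have hmv : ∀ i, (((σ :: T).reverse.map (fun σ => !![-σ * a, -b; 1, 0])).prod).mulVec v i
          = ((T.reverse.map (fun σ => !![-σ * a, -b; 1, 0])).prod).mulVec
              ((!![-σ * a, -b; 1, 0]).mulVec v) i := by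
        intro i
        rw [hprod, Matrix.mulVec_mulVec]
      obtain ⟨hc, he⟩ := hstep σ (hJ σ (List.mem_cons_self)) v hv
      obtain ⟨hc2, he2⟩ := ih (fun τ hτ => hJ τ (List.mem_cons_of_mem _ hτ))
        ((!![-σ * a, -b; 1, 0]).mulVec v) hc
      constructor
      · rw [hmv 1, hmv 0]; exact hc2
      · rw [hmv 0, hmv 1]
        have hpow : 0 < l ^ T.length := pow_pos hl0 _
        calc l ^ (σ :: T).length * max |v 0| |v 1|
            = l ^ T.length * (l * max |v 0| |v 1|) := by
              rw [List.length_cons, pow_succ]; ring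
          _ ≤ l ^ T.length * max |((!![-σ * a, -b; 1, 0]).mulVec v) 0|
              |((!![-σ * a, -b; 1, 0]).mulVec v) 1| := by
              exact mul_le_mul_of_nonneg_left he (le_of_lt hpow)
          _ ≤ _ := he2
  -- iterate: part 1 with cone preservation
  have hpow : ∀ m : ℕ, ∀ v : Fin 2 → ℝ, |v 1| ≤ |v 0| / l →
      (|((A ^ m).mulVec v) 1| ≤ |((A ^ m).mulVec v) 0| / l ∧
        l ^ (I.length * m) * max |v 0| |v 1| ≤
          max |((A ^ m).mulVec v) 0| |((A ^ m).mulVec v) 1|) := by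
    intro m
    induction m with
    | zero =>
      intro v hv
      simp only [pow_zero, Matrix.one_mulVec, Nat.mul_zero, one_mul]
      exact ⟨hv, le_refl _⟩
    | succ k ih =>
      intro v hv
      have hA : A ^ (k + 1) = A ^ k * A := pow_succ A k
      have hmv : ∀ i, ((A ^ (k + 1)).mulVec v) i = ((A ^ k).mulVec (A.mulVec v)) i := by
        intro i; rw [hA, ← Matrix.mulVec_mulVec]
      obtain ⟨hc, he⟩ := hword I hI v hv
      obtain ⟨hc2, he2⟩ := ih (A.mulVec v) hc
      constructor
      · rw [hmv 1, hmv 0]; exact hc2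
      · rw [hmv 0, hmv 1]
        have hpowpos : 0 < l ^ (I.length * k) := pow_pos hl0 _
        calc l ^ (I.length * (k + 1)) * max |v 0| |v 1|
            = l ^ (I.length * k) * (l ^ I.length * max |v 0| |v 1|) := by
              rw [Nat.mul_succ, pow_add]; ring
          _ ≤ l ^ (I.length * k) * max |(A.mulVec v) 0| |(A.mulVec v) 1| :=
              mul_le_mul_of_nonneg_left he (le_of_lt hpowpos)
          _ ≤ _ := he2
  refine ⟨fun m v hv => (hpow m v hv).2, ?_⟩
  -- part 2: spectral radius
  set Ac : Matrix (Fin 2) (Fin 2) ℂ := A.map (Complex.ofReal : ℝ → ℂ) with hAc_def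
  set L : ℝ := l ^ I.length with hL_def
  have hL1 : 1 < L := one_lt_pow₀ hl1 (by omega)
  have hL0 : 0 < L := by linarith
  -- norm lower bound for Ac ^ m
  have hAcpow : ∀ m : ℕ, Ac ^ m = (A ^ m).map (Complex.ofReal : ℝ → ℂ) := by
    intro m
    have : (Complex.ofRealHom.mapMatrix A) ^ m
        = Complex.ofRealHom.mapMatrix (A ^ m) := (map_pow _ _ _).symm
    exact this
  have hnorm : ∀ m : ℕ, L ^ m ≤ ‖Ac ^ m‖ := by
    intro m
    have hv1 : |((![1, 0] : Fin 2 → ℝ)) 1| ≤ |((![1, 0] : Fin 2 → ℝ)) 0| / l := by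
      simp
      positivity
    have h := (hpow m ![1, 0] hv1).2
    simp only [Matrix.cons_val_zero, Matrix.cons_val_one, Matrix.head_cons, abs_one, abs_zero,
      max_eq_left (zero_le_one), mul_one] at h
    have hLm : L ^ m = l ^ (I.length * m) := by rw [hL_def, ← pow_mul]
    -- the complex vector
    set w : Fin 2 → ℂ := ![1, 0] with hw_def
    have hmvc : ∀ i, ((Ac ^ m).mulVec w) i = (((A ^ m).mulVec ![1, 0]) i : ℂ) := by
      intro i
      rw [hAcpow m]
      simp [hw_def, Matrix.mulVec, dotProduct, Fin.sum_univ_two, Matrix.map_apply, Matrix.vecHead]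
    have hcomp : ∀ i : Fin 2, |((A ^ m).mulVec ![1, 0]) i| ≤ ‖(Ac ^ m).mulVec w‖ := by
      intro i
      have := norm_le_pi_norm ((Ac ^ m).mulVec w) i
      rw [hmvc i] at this
      simpa using this
    have hwle : ‖w‖ ≤ 1 := by
      rw [pi_norm_le_iff_of_nonneg zero_le_one]
      intro i
      fin_cases i <;> simp [hw_def]
    have hmvnorm : ‖(Ac ^ m).mulVec w‖ ≤ ‖Ac ^ m‖ := by
      calc ‖(Ac ^ m).mulVec w‖ ≤ ‖Ac ^ m‖ * ‖w‖ := Matrix.linfty_opNorm_mulVec _ _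
        _ ≤ ‖Ac ^ m‖ * 1 := mul_le_mul_of_nonneg_left hwle (norm_nonneg _)
        _ = ‖Ac ^ m‖ := mul_one _
    calc L ^ m = l ^ (I.length * m) := hLm
      _ ≤ max |((A ^ m).mulVec ![1, 0]) 0| |((A ^ m).mulVec ![1, 0]) 1| := h
      _ ≤ ‖(Ac ^ m).mulVec w‖ := max_le (hcomp 0) (hcomp 1)
      _ ≤ ‖Ac ^ m‖ := hmvnorm
  -- Gelfand
  have hsr : ENNReal.ofReal L ≤ spectralRadius ℂ Ac := by
    apply ge_of_tendsto (spectrum.pow_nnnorm_pow_one_div_tendsto_nhds_spectralRadius Ac)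
    filter_upwards [Filter.eventually_ge_atTop 1] with n hn
    have hn0 : (n : ℝ) ≠ 0 := by positivity
    have h1 : ENNReal.ofReal (L ^ n) ≤ (‖Ac ^ n‖₊ : ENNReal) := by
      rw [show ((‖Ac ^ n‖₊ : ENNReal)) = ENNReal.ofReal ‖Ac ^ n‖ from
        (ENNReal.ofReal_eq_coe_nnreal (norm_nonneg _)).symm]
      exact ENNReal.ofReal_le_ofReal (hnorm n)
    have h2 : (ENNReal.ofReal L) ^ n ≤ (‖Ac ^ n‖₊ : ENNReal) := by
      rwa [← ENNReal.ofReal_pow (le_of_lt hL0)]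
    calc ENNReal.ofReal L
        = ((ENNReal.ofReal L) ^ n) ^ (1 / (n:ℝ)) := by
          rw [← ENNReal.rpow_natCast, ← ENNReal.rpow_mul, mul_one_div, div_self hn0,
            ENNReal.rpow_one]
      _ ≤ ((‖Ac ^ n‖₊ : ENNReal)) ^ (1 / (n:ℝ)) :=
          ENNReal.rpow_le_rpow h2 (by positivity)
  -- extract an eigenvalue of maximal modulus
  have hne : (spectrum ℂ Ac).Nonempty := spectrum.nonempty Ac
  have hcpt : IsCompact (spectrum ℂ Ac) := spectrum.isCompact Ac
  obtain ⟨ν, hν, hmax⟩ := hcpt.exists_isMaxOn hne continuous_norm.continuousOn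
  refine ⟨ν, hν, ?_⟩
  have hsr2 : spectralRadius ℂ Ac ≤ (‖ν‖₊ : ENNReal) := by
    rw [spectralRadius]
    exact iSup₂_le fun k hk => ENNReal.coe_le_coe.2 (hmax hk)
  have : ENNReal.ofReal L ≤ (‖ν‖₊ : ENNReal) := le_trans hsr hsr2
  rw [show ((‖ν‖₊ : ENNReal)) = ENNReal.ofReal ‖ν‖ from
    (ENNReal.ofReal_eq_coe_nnreal (norm_nonneg _)).symm, ENNReal.ofReal_le_ofReal_iff (norm_nonneg _)] at this
  exact this
end

section
/- Suppose a > b + 1 and 0 ≤ b ≤ 1, and let I be a finite word in {−1, +1} of length M ≥ 1. Then the affine map Λ_I = Λ_{I_M} ∘ ⋯ ∘ Λ_{I₁} has a unique fixed point θ ∈ ℝ², and this fixed point is a saddle: the eigenvalues ν₁, ν₂ of the linear part A = DΛ_I satisfy |ν₁| ≥ λ^M > 1 and |ν₂| ≤ μ^M < 1, where λ = (a + √(a² − 4b))/2 and μ = b/λ. -/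
noncomputable def Bmat (a b σ : ℝ) : Matrix (Fin 2) (Fin 2) ℝ := !![-σ * a, -b; 1, 0]

noncomputable def Amat (a b : ℝ) (I : List ℝ) : Matrix (Fin 2) (Fin 2) ℝ :=
  (I.reverse.map (Bmat a b)).prod

lemma Amat_nil (a b : ℝ) : Amat a b [] = 1 := rfl

lemma Amat_cons (a b σ : ℝ) (J : List ℝ) :
    Amat a b (σ :: J) = Amat a b J * Bmat a b σ := by
  simp [Amat]

lemma Amat_det (a b : ℝ) (J : List ℝ) : (Amat a b J).det = b ^ J.length := by
  induction J with
  | nil => simp [Amat_nil]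
  | cons σ J ih =>
      rw [Amat_cons, Matrix.det_mul, ih]
      have : (Bmat a b σ).det = b := by
        simp [Bmat, Matrix.det_fin_two_of]
      rw [this, List.length_cons, pow_succ, mul_comm]

lemma Amat_cons_apply (a b σ : ℝ) (J : List ℝ) (i : Fin 2) (x y : ℝ) :
    Amat a b (σ :: J) i 0 * x + Amat a b (σ :: J) i 1 * y
      = Amat a b J i 0 * (-σ * a * x - b * y) + Amat a b J i 1 * x := by
  rw [Amat_cons]
  simp [Matrix.mul_apply, Fin.sum_univ_two, Bmat]
  ring

lemma foldl_affine (a b : ℝ) (J : List ℝ) (v : ℝ × ℝ) :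
    J.foldl (fun p σ => (-σ * a * p.1 - b * p.2 + (a - b - 1), p.1)) v
      = (Amat a b J 0 0 * v.1 + Amat a b J 0 1 * v.2
          + (J.foldl (fun p σ => (-σ * a * p.1 - b * p.2 + (a - b - 1), p.1)) ((0:ℝ),(0:ℝ))).1,
         Amat a b J 1 0 * v.1 + Amat a b J 1 1 * v.2
          + (J.foldl (fun p σ => (-σ * a * p.1 - b * p.2 + (a - b - 1), p.1)) ((0:ℝ),(0:ℝ))).2) := by
  induction J generalizing v with
  | nil => simp [Amat_nil, Matrix.one_apply]
  | cons σ J ih =>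
      simp only [List.foldl_cons]
      rw [ih (-σ * a * v.1 - b * v.2 + (a - b - 1), v.1),
          ih (-σ * a * 0 - b * 0 + (a - b - 1), 0)]
      have h0 := Amat_cons_apply a b σ J 0 v.1 v.2
      have h1 := Amat_cons_apply a b σ J 1 v.1 v.2
      refine Prod.ext ?_ ?_ <;> simp <;> nlinarith [h0, h1]

lemma cone_step (a b l σ x y : ℝ) (hl1 : 1 < l) (hb0 : 0 ≤ b)
    (hsum : l * l + b = a * l) (hσ : σ = -1 ∨ σ = 1)
    (hxy : l * |y| ≤ |x|) : l * |x| ≤ |-σ * a * x - b * y| := by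
  have hl0 : (0:ℝ) < l := lt_trans one_pos hl1
  have ha : 0 < a := by nlinarith
  have h1 : |(-σ * a * x)| = a * |x| := by
    rcases hσ with h | h <;> subst h <;>
      simp [abs_mul, abs_of_pos ha, mul_comm]
  have h2 : |(-σ * a * x)| - |b * y| ≤ |(-σ * a * x) - b * y| :=
    abs_sub_abs_le_abs_sub _ _
  have h3 : |b * y| = b * |y| := by rw [abs_mul, abs_of_nonneg hb0]
  have h4 : b * (l * |y|) ≤ b * |x| := by
    exact mul_le_mul_of_nonneg_left hxy hb0
  nlinarith [abs_nonneg x, abs_nonneg y]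

lemma cone_expand (a b l : ℝ) (hl1 : 1 < l) (hb0 : 0 ≤ b)
    (hsum : l * l + b = a * l) :
    ∀ (J : List ℝ), (∀ σ ∈ J, σ = -1 ∨ σ = 1) → ∀ x y : ℝ, l * |y| ≤ |x| →
      l * |Amat a b J 1 0 * x + Amat a b J 1 1 * y|
          ≤ |Amat a b J 0 0 * x + Amat a b J 0 1 * y| ∧
      l ^ J.length * |x| ≤ |Amat a b J 0 0 * x + Amat a b J 0 1 * y| := by
  have hl0 : (0:ℝ) < l := lt_trans one_pos hl1
  intro J
  induction J with
  | nil =>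
      intro _ x y hxy
      refine ⟨?_, ?_⟩ <;> simp [Amat_nil, Matrix.one_apply] <;> try exact hxy
  | cons σ J ih =>
      intro hJ x y hxy
      have hσ : σ = -1 ∨ σ = 1 := hJ σ List.mem_cons_self
      have key : l * |x| ≤ |-σ * a * x - b * y| :=
        cone_step a b l σ x y hl1 hb0 hsum hσ hxy
      have hxy' : l * |x| ≤ |(-σ * a * x - b * y)| := key
      have ih' := ih (fun τ hτ => hJ τ (List.mem_cons_of_mem σ hτ))
        (-σ * a * x - b * y) x hxy'
      rw [Amat_cons_apply a b σ J 0 x y, Amat_cons_apply a b σ J 1 x y]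
      refine ⟨ih'.1, ?_⟩
      have h5 : l ^ J.length * (l * |x|) ≤ l ^ J.length * |(-σ * a * x - b * y)| :=
        mul_le_mul_of_nonneg_left key (le_of_lt (pow_pos hl0 _))
      calc l ^ (σ :: J).length * |x| = l ^ J.length * (l * |x|) := by
            rw [List.length_cons, pow_succ]; ring
        _ ≤ l ^ J.length * |(-σ * a * x - b * y)| := h5
        _ ≤ _ := ih'.2

lemma exists_eigen (a b l : ℝ) (hl1 : 1 < l) (hb0 : 0 ≤ b)
    (hsum : l * l + b = a * l) (J : List ℝ) (hJ : ∀ σ ∈ J, σ = -1 ∨ σ = 1) :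
    ∃ s ν : ℝ, Amat a b J 0 0 + Amat a b J 0 1 * s = ν ∧
      Amat a b J 1 0 + Amat a b J 1 1 * s = ν * s ∧
      l ^ J.length ≤ |ν| := by
  have hl0 : (0:ℝ) < l := lt_trans one_pos hl1
  set A := Amat a b J with hA
  set f1 : ℝ → ℝ := fun s => A 0 0 + A 0 1 * s with hf1
  set f2 : ℝ → ℝ := fun s => A 1 0 + A 1 1 * s with hf2
  have hcone : ∀ s : ℝ, |s| ≤ 1 / l →
      l * |f2 s| ≤ |f1 s| ∧ l ^ J.length ≤ |f1 s| := by
    intro s hs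
    have h1 : l * |s| ≤ |(1:ℝ)| := by
      rw [abs_one]
      calc l * |s| ≤ l * (1/l) := mul_le_mul_of_nonneg_left hs (le_of_lt hl0)
        _ = 1 := by field_simp
    have := cone_expand a b l hl1 hb0 hsum J hJ 1 s h1
    simpa [hf1, hf2, abs_one] using this
  have hne : ∀ s ∈ Set.Icc (-(1/l)) (1/l), f1 s ≠ 0 := by
    intro s hs h0
    have hs' : |s| ≤ 1/l := abs_le.mpr ⟨hs.1, hs.2⟩
    have := (hcone s hs').2
    rw [h0, abs_zero] at this
    exact absurd this (not_le.mpr (pow_pos hl0 _))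
  have hle : -(1/l) ≤ 1/l := by
    have := one_div_pos.mpr hl0; linarith
  have hmem : ∀ s ∈ Set.Icc (-(1/l)) (1/l), |s| ≤ 1/l :=
    fun s hs => abs_le.mpr ⟨hs.1, hs.2⟩
  have hend1 : -(1/l) ∈ Set.Icc (-(1/l)) (1/l) := ⟨le_refl _, hle⟩
  have hend2 : (1/l) ∈ Set.Icc (-(1/l)) (1/l) := ⟨hle, le_refl _⟩
  have hf1c : Continuous f1 := by rw [hf1]; fun_prop
  set g : ℝ → ℝ := fun s => f2 s - s * f1 s with hg
  have hgc : ContinuousOn g (Set.Icc (-(1/l)) (1/l)) := by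
    apply Continuous.continuousOn; rw [hg, hf1, hf2]; fun_prop
  have hbnd : ∀ s ∈ Set.Icc (-(1/l)) (1/l),
      -|f1 s| ≤ l * f2 s ∧ l * f2 s ≤ |f1 s| := by
    intro s hs
    have h := (hcone s (hmem s hs)).1
    constructor <;> nlinarith [le_abs_self (f2 s), neg_abs_le (f2 s), hl0]
  -- sign of f1 is constant on the interval
  have key : ∀ p ∈ Set.Icc (-(1/l)) (1/l), ∀ q ∈ Set.Icc (-(1/l)) (1/l),
      0 < f1 p → 0 < f1 q := by
    intro p hp q hq hfp
    rcases lt_or_gt_of_ne (hne q hq) with h | h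
    · exfalso
      have hsub : Set.uIcc p q ⊆ Set.Icc (-(1/l)) (1/l) := Set.uIcc_subset_Icc hp hq
      have := intermediate_value_uIcc (hf1c.continuousOn (s := Set.uIcc p q))
      have h0 : (0:ℝ) ∈ Set.uIcc (f1 p) (f1 q) := by
        rw [Set.mem_uIcc]; right; exact ⟨le_of_lt h, le_of_lt hfp⟩
      obtain ⟨s0, hs0, hfs0⟩ := this h0
      exact hne s0 (hsub hs0) hfs0
    · exact h
  rcases lt_or_gt_of_ne (hne _ hend1) with hneg | hpos
  · -- f1 negative on the interval
    have keyn : ∀ q ∈ Set.Icc (-(1/l)) (1/l), f1 q < 0 := by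
      intro q hq
      rcases lt_or_gt_of_ne (hne q hq) with h | h
      · exact h
      · exact absurd (key q hq _ hend1 h) (not_lt.mpr (le_of_lt hneg))
    have ha1 : |f1 (-(1/l))| = -(f1 (-(1/l))) := abs_of_neg hneg
    have ha2 : |f1 (1/l)| = -(f1 (1/l)) := abs_of_neg (keyn _ hend2)
    have hg1 : g (-(1/l)) ≤ 0 := by
      have hb := (hbnd _ hend1).2
      rw [ha1] at hb
      have : l * g (-(1/l)) = l * f2 (-(1/l)) + f1 (-(1/l)) := by
        rw [hg]; field_simp; ring
      nlinarith
    have hg2 : 0 ≤ g (1/l) := by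
      have hb := (hbnd _ hend2).1
      rw [ha2] at hb
      have : l * g (1/l) = l * f2 (1/l) - f1 (1/l) := by
        rw [hg]; field_simp
      nlinarith
    obtain ⟨s, hs, hgs⟩ := intermediate_value_Icc hle hgc ⟨hg1, hg2⟩
    refine ⟨s, f1 s, rfl, ?_, (hcone s (hmem s hs)).2⟩
    have h2 : f2 s - s * f1 s = 0 := hgs
    have h3 : f2 s = f1 s * s := by linarith [mul_comm s (f1 s)]
    exact h3
  · -- f1 positive on the interval
    have keyp : ∀ q ∈ Set.Icc (-(1/l)) (1/l), 0 < f1 q := fun q hq => key _ hend1 q hq hpos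
    have ha1 : |f1 (-(1/l))| = f1 (-(1/l)) := abs_of_pos hpos
    have ha2 : |f1 (1/l)| = f1 (1/l) := abs_of_pos (keyp _ hend2)
    have hg1 : 0 ≤ g (-(1/l)) := by
      have hb := (hbnd _ hend1).1
      rw [ha1] at hb
      have : l * g (-(1/l)) = l * f2 (-(1/l)) + f1 (-(1/l)) := by
        rw [hg]; field_simp; ring
      nlinarith
    have hg2 : g (1/l) ≤ 0 := by
      have hb := (hbnd _ hend2).2
      rw [ha2] at hb
      have : l * g (1/l) = l * f2 (1/l) - f1 (1/l) := by
        rw [hg]; field_simp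
      nlinarith
    obtain ⟨s, hs, hgs⟩ := intermediate_value_Icc' hle hgc ⟨hg2, hg1⟩
    refine ⟨s, f1 s, rfl, ?_, (hcone s (hmem s hs)).2⟩
    have h2 : f2 s - s * f1 s = 0 := hgs
    have h3 : f2 s = f1 s * s := by linarith [mul_comm s (f1 s)]
    exact h3

lemma spectrum_fin_two (M : Matrix (Fin 2) (Fin 2) ℂ) (ν₁ ν₂ : ℂ)
    (h : ∀ z : ℂ, (z - M 0 0) * (z - M 1 1) - M 0 1 * M 1 0 = (z - ν₁) * (z - ν₂)) :
    spectrum ℂ M = {ν₁, ν₂} := by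
  ext z
  rw [spectrum.mem_iff]
  have hdet : (algebraMap ℂ (Matrix (Fin 2) (Fin 2) ℂ) z - M).det
      = (z - M 0 0) * (z - M 1 1) - M 0 1 * M 1 0 := by
    rw [Matrix.det_fin_two]
    simp [Matrix.algebraMap_matrix_apply]
  rw [Matrix.isUnit_iff_isUnit_det, hdet, h z, isUnit_iff_ne_zero, not_not,
    mul_eq_zero, sub_eq_zero, sub_eq_zero]
  simp [Set.mem_insert_iff]

lemma l_facts (a b : ℝ) (hab : a > b + 1) (hb0 : 0 ≤ b) (hb1 : b ≤ 1) :
    1 < (a + Real.sqrt (a ^ 2 - 4 * b)) / 2 ∧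
    ((a + Real.sqrt (a ^ 2 - 4 * b)) / 2) * ((a + Real.sqrt (a ^ 2 - 4 * b)) / 2) + b
      = a * ((a + Real.sqrt (a ^ 2 - 4 * b)) / 2) := by
  have hd : 0 ≤ a ^ 2 - 4 * b := by nlinarith
  have hs : Real.sqrt (a ^ 2 - 4 * b) ^ 2 = a ^ 2 - 4 * b := Real.sq_sqrt hd
  constructor
  · have h1 : Real.sqrt ((1 - b) ^ 2) ≤ Real.sqrt (a ^ 2 - 4 * b) :=
      Real.sqrt_le_sqrt (by nlinarith)
    rw [Real.sqrt_sq (by linarith)] at h1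
    linarith
  · nlinarith [hs]

theorem lozi_formal_periodic_point (a b : ℝ) (hab : a > b + 1) (hb0 : 0 ≤ b) (hb1 : b ≤ 1)
    (I : List ℝ) (hI : ∀ σ ∈ I, σ = -1 ∨ σ = 1) (hlen : 1 ≤ I.length) :
    let l := (a + Real.sqrt (a ^ 2 - 4 * b)) / 2
    let μ := b / l
    let lozi : ℝ → ℝ × ℝ → ℝ × ℝ :=
      fun σ p => (-σ * a * p.1 - b * p.2 + (a - b - 1), p.1)
    let ΛI : ℝ × ℝ → ℝ × ℝ := fun v => I.foldl (fun p σ => lozi σ p) v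
    let A : Matrix (Fin 2) (Fin 2) ℝ :=
      (I.reverse.map (fun σ => !![-σ * a, -b; 1, 0])).prod
    (∃! θ : ℝ × ℝ, ΛI θ = θ) ∧
    (∃ ν₁ ν₂ : ℂ, spectrum ℂ (A.map (Complex.ofReal : ℝ → ℂ)) = {ν₁, ν₂} ∧
      l ^ I.length ≤ ‖ν₁‖ ∧ 1 < l ^ I.length ∧
      ‖ν₂‖ ≤ μ ^ I.length ∧ μ ^ I.length < 1) := by
  intro l μ lozi ΛI A
  obtain ⟨hl1, hsum⟩ := l_facts a b hab hb0 hb1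
  have hl1 : 1 < l := hl1
  have hsum : l * l + b = a * l := hsum
  have hl0 : (0:ℝ) < l := lt_trans one_pos hl1
  have hμ0 : 0 ≤ μ := div_nonneg hb0 hl0.le
  have hμ1 : μ < 1 := (div_lt_one hl0).mpr (lt_of_le_of_lt hb1 hl1)
  have hlμ : l * μ = b := by
    show l * (b / l) = b
    field_simp
  have hA : A = Amat a b I := rfl
  have hlenne : I.length ≠ 0 := Nat.one_le_iff_ne_zero.mp hlen
  have hlpow : 1 < l ^ I.length := one_lt_pow₀ hl1 hlenne
  have hμpow : μ ^ I.length < 1 := pow_lt_one₀ hμ0 hμ1 hlenne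
  obtain ⟨s, ν, e1, e2, hν⟩ := exists_eigen a b l hl1 hb0 hsum I hI
  rw [← hA] at e1 e2
  have hd2 : A 0 0 * A 1 1 - A 0 1 * A 1 0 = b ^ I.length := by
    rw [← Matrix.det_fin_two, hA, Amat_det]
  set ν₂r : ℝ := (A 0 0 + A 1 1) - ν with hν₂r
  have hchar : ν * ν - (A 0 0 + A 1 1) * ν + b ^ I.length = 0 := by
    linear_combination (A 1 1 - ν) * e1 - A 0 1 * e2 - hd2
  have hprod : ν * ν₂r = b ^ I.length := by
    rw [hν₂r]; linear_combination -hchar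
  have hνabs : l ^ I.length ≤ |ν| := hν
  have hν0 : 1 < |ν| := lt_of_lt_of_le hlpow hνabs
  have hν2abs : |ν₂r| ≤ μ ^ I.length := by
    have h1 : |ν| * |ν₂r| = l ^ I.length * μ ^ I.length := by
      rw [← abs_mul, hprod, abs_of_nonneg (pow_nonneg hb0 _), ← mul_pow, hlμ]
    nlinarith [pow_nonneg hμ0 I.length, abs_nonneg ν₂r, pow_pos hl0 I.length]
  constructor
  · -- unique fixed point
    set w : ℝ × ℝ := I.foldl (fun p σ => (-σ * a * p.1 - b * p.2 + (a - b - 1), p.1)) ((0:ℝ),(0:ℝ)) with hw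
    have hΛ : ∀ v : ℝ × ℝ, ΛI v =
        (A 0 0 * v.1 + A 0 1 * v.2 + w.1, A 1 0 * v.1 + A 1 1 * v.2 + w.2) :=
      fun v => foldl_affine a b I v
    set D : ℝ := (1 - A 0 0) * (1 - A 1 1) - A 0 1 * A 1 0 with hD
    have hDfac : D = (1 - ν) * (1 - ν₂r) := by
      rw [hD, hν₂r]; linear_combination hd2 - hprod
    have hν1 : ν ≠ 1 := by
      intro h; rw [h] at hν0; simp at hν0
    have hν21 : ν₂r ≠ 1 := by
      intro h; rw [h] at hν2abs; have := abs_one (α := ℝ); linarith [hμpow, le_of_eq this.symm, hν2abs]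
    have hD0 : D ≠ 0 := by
      rw [hDfac]
      exact mul_ne_zero (sub_ne_zero.mpr (Ne.symm hν1)) (sub_ne_zero.mpr (Ne.symm hν21))
    refine ⟨(((1 - A 1 1) * w.1 + A 0 1 * w.2) / D,
            (A 1 0 * w.1 + (1 - A 0 0) * w.2) / D), ?_, ?_⟩
    · show ΛI _ = _
      rw [hΛ]
      refine Prod.ext ?_ ?_ <;> · show _ = _ ; field_simp; ring
    · intro θ' h'
      have e1' : A 0 0 * θ'.1 + A 0 1 * θ'.2 + w.1 = θ'.1 := by
        rw [hΛ θ'] at h'; exact congrArg Prod.fst h'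
      have e2' : A 1 0 * θ'.1 + A 1 1 * θ'.2 + w.2 = θ'.2 := by
        rw [hΛ θ'] at h'; exact congrArg Prod.snd h'
      have hx : D * θ'.1 = (1 - A 1 1) * w.1 + A 0 1 * w.2 := by
        rw [hD]; linear_combination (A 1 1 - 1) * e1' - A 0 1 * e2'
      have hy : D * θ'.2 = A 1 0 * w.1 + (1 - A 0 0) * w.2 := by
        rw [hD]; linear_combination -(A 1 0) * e1' + (A 0 0 - 1) * e2'
      refine Prod.ext ?_ ?_
      · show θ'.1 = _ / D
        rw [eq_div_iff hD0]; linear_combination hx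
      · show θ'.2 = _ / D
        rw [eq_div_iff hD0]; linear_combination hy
  · -- spectrum
    refine ⟨(ν:ℂ), (ν₂r:ℂ), ?_, ?_, hlpow, ?_, hμpow⟩
    · apply spectrum_fin_two
      intro z
      simp only [Matrix.map_apply]
      have c1 : (ν:ℂ) + (ν₂r:ℂ) = (A 0 0 : ℝ) + (A 1 1 : ℝ) := by
        rw [hν₂r]; push_cast; ring
      have c2 : (ν:ℂ) * (ν₂r:ℂ) = ((A 0 0 : ℝ) : ℂ) * (A 1 1 : ℝ) - ((A 0 1 : ℝ) : ℂ) * (A 1 0 : ℝ) := by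
        have h := congrArg (fun r : ℝ => (r : ℂ))
          (show ν * ν₂r = A 0 0 * A 1 1 - A 0 1 * A 1 0 by rw [hprod, hd2])
        push_cast at h
        exact h
      linear_combination z * c1 - c2
    · rw [Complex.norm_real, Real.norm_eq_abs]; exact hνabs
    · rw [Complex.norm_real, Real.norm_eq_abs]; exact hν2abs
end

section
/- Let b = 0 and a > 1 and consider the tent map T_a(x) = −a|x| + (a − 1). Then the quantities u = a − 1, r_∞ = 1, and r_m = 1 − 2/(a^{m−1}(a+1)) for m ≥ 1 satisfy: there exists c > 0 such that d/da (u − r_m) > c on [7/5, ∞) for every 2 ≤ m < ∞. Explicitly, d/da(u − r_m) = 1 − (2(m−1))/(a^m (a+1)) − 2/(a^{m−1}(a+1)²) > 0 for all a ≥ 7/5 and m ≥ 2. -/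
lemma tent_aux_shift (n : ℕ) : ((n : ℝ) + 4) - 1 ≤ (4/5) * (7/5 : ℝ) ^ (n + 4) := by
  induction n with
  | zero => norm_num
  | succ n ih =>
      have hpow : (7/5 : ℝ) ^ (n + 1 + 4) = (7/5) * (7/5 : ℝ) ^ (n + 4) := by
        ring
      push_cast
      push_cast at ih
      rw [hpow]
      nlinarith [pow_pos (by norm_num : (0:ℝ) < 7/5) (n + 4)]

lemma tent_aux (m : ℕ) (hm : 2 ≤ m) : (m : ℝ) - 1 ≤ (4/5) * (7/5 : ℝ) ^ m := by
  match m, hm with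
  | 2, _ => norm_num
  | 3, _ => norm_num
  | (n + 4), _ =>
      have := tent_aux_shift n
      push_cast at this ⊢
      linarith

theorem tent_increasing_critical_value :
    ∃ c > (0 : ℝ), ∀ m : ℕ, 2 ≤ m → ∀ a : ℝ, 7 / 5 ≤ a →
      HasDerivAt (fun t : ℝ => (t - 1) - (1 - 2 / (t ^ (m - 1) * (t + 1))))
        (1 - 2 * ((m : ℝ) - 1) / (a ^ m * (a + 1)) - 2 / (a ^ (m - 1) * (a + 1) ^ 2)) a ∧
      c < 1 - 2 * ((m : ℝ) - 1) / (a ^ m * (a + 1)) - 2 / (a ^ (m - 1) * (a + 1) ^ 2) ∧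
      0 < 1 - 2 * ((m : ℝ) - 1) / (a ^ m * (a + 1)) - 2 / (a ^ (m - 1) * (a + 1) ^ 2) := by
  refine ⟨1/24, by norm_num, ?_⟩
  intro m hm a ha
  obtain ⟨k, rfl⟩ : ∃ k, m = k + 2 := ⟨m - 2, by omega⟩
  have ha0 : (0:ℝ) < a := by linarith
  have hm1 : k + 2 - 1 = k + 1 := by omega
  have hpk1 : (0:ℝ) < a ^ (k+1) := pow_pos ha0 _
  have hpk2 : (0:ℝ) < a ^ (k+2) := pow_pos ha0 _
  have ha1 : (0:ℝ) < a + 1 := by linarith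
  have hne : a ^ (k+1) * (a + 1) ≠ 0 := by positivity
  have hane : a ≠ 0 := ne_of_gt ha0
  have ha1ne : a + 1 ≠ 0 := ne_of_gt ha1
  -- derivative
  have hg : HasDerivAt (fun t : ℝ => t ^ (k+1) * (t + 1))
      ((↑(k+1) * a ^ k) * (a + 1) + a ^ (k+1) * 1) a := by
    simpa using (hasDerivAt_pow (k+1) a).fun_mul ((hasDerivAt_id a).add_const 1)
  have hdiv : HasDerivAt (fun t : ℝ => 2 / (t ^ (k+1) * (t + 1)))
      ((0 * (a ^ (k+1) * (a + 1)) - 2 * ((↑(k+1) * a ^ k) * (a + 1) + a ^ (k+1) * 1)) /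
        (a ^ (k+1) * (a + 1)) ^ 2) a :=
    (hasDerivAt_const a 2).div hg hne
  have hf : HasDerivAt (fun t : ℝ => (t - 1) - (1 - 2 / (t ^ (k+2-1) * (t + 1))))
      (1 - (0 - (0 * (a ^ (k+1) * (a + 1)) - 2 * ((↑(k+1) * a ^ k) * (a + 1) + a ^ (k+1) * 1)) /
        (a ^ (k+1) * (a + 1)) ^ 2)) a := by
    rw [hm1]
    simpa using ((hasDerivAt_id a).sub_const 1).fun_sub ((hasDerivAt_const a 1).fun_sub hdiv)
  have hderiv : HasDerivAt (fun t : ℝ => (t - 1) - (1 - 2 / (t ^ (k+2-1) * (t + 1))))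
      (1 - 2 * ((↑(k+2) : ℝ) - 1) / (a ^ (k+2) * (a + 1)) - 2 / (a ^ (k+2-1) * (a + 1) ^ 2)) a := by
    rw [hm1]
    rw [hm1] at hf
    convert hf using 1
    push_cast
    rw [show a ^ (k+2) = a ^ (k+1) * a by ring]
    field_simp
    ring
  refine ⟨hderiv, ?_, ?_⟩
  all_goals {
    rw [hm1]
    have hkey : ((k:ℝ) + 2) - 1 ≤ (4/5) * (7/5 : ℝ) ^ (k+2) := by
      have := tent_aux (k+2) (by omega); push_cast at this ⊢; linarith
    have hpow2 : (7/5 : ℝ) ^ (k+2) ≤ a ^ (k+2) := pow_le_pow_left₀ (by norm_num) ha _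
    have hpow1 : (7/5 : ℝ) ≤ a ^ (k+1) := le_trans (by linarith) (le_self_pow₀ (by linarith) (by omega))
    have hT1 : 2 * ((↑(k+2) : ℝ) - 1) / (a ^ (k+2) * (a + 1)) ≤ 2/3 := by
      rw [div_le_iff₀ (by positivity)]
      push_cast
      nlinarith [hpk2]
    have hT2 : 2 / (a ^ (k+1) * (a + 1) ^ 2) ≤ 125/504 := by
      rw [div_le_iff₀ (by positivity)]
      nlinarith [hpk1, sq_nonneg (a+1)]
    push_cast at hT1 ⊢
    linarith
  }
end

section
/- Let b = 0, a > 1, u = a − 1, r_m = 1 − 2/(a^{m−1}(a+1)) for 1 ≤ m < ∞, r_∞ = 1. Then: (1) u = r₂ if and only if a = √2; (2) for a < √2 (and a > 1), u < r₂; (3) u = r_∞ if and only if a = 2; (4) for each m ≥ 2, the equation u = r_m, i.e. a − 2 + 2/(a^{m−1}(a+1)) = 0, has a unique solution a_m in (√2, 2) when m ≥ 3, and the sequence (a_m) is strictly increasing with a₂ = √2 and a_m → 2. -/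
noncomputable section
namespace TentAux

lemma one_lt_sqrt2 : (1:ℝ) < Real.sqrt 2 := by
  rw [show (1:ℝ) = Real.sqrt 1 by simp]
  exact Real.sqrt_lt_sqrt (by norm_num) (by norm_num)

lemma s2 : Real.sqrt 2 * Real.sqrt 2 = 2 := Real.mul_self_sqrt (by norm_num)

lemma sqrt2_lt_two : Real.sqrt 2 < 2 := by nlinarith [s2, one_lt_sqrt2]

lemma h14 : (1.4:ℝ) < Real.sqrt 2 := (Real.lt_sqrt (by norm_num)).mpr (by norm_num)

lemma pow_sub_pow_le (k : ℕ) {a b : ℝ} (ha : 0 ≤ a) (hab : a ≤ b) :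
    b ^ (k+1) - a ^ (k+1) ≤ (k+1) * b ^ k * (b - a) := by
  induction k with
  | zero => simp
  | succ n ih =>
    have hb : 0 ≤ b := ha.trans hab
    have h1 : b ^ (n+2) - a ^ (n+2) = b * (b^(n+1) - a^(n+1)) + a^(n+1) * (b - a) := by ring
    have h2 : a ^ (n+1) * (b-a) ≤ b ^ (n+1) * (b-a) :=
      mul_le_mul_of_nonneg_right (pow_le_pow_left₀ ha hab _) (by linarith)
    have h3 := mul_le_mul_of_nonneg_left ih hb
    have h4 : b * ((↑n+1) * b ^ n * (b - a)) = (↑n+1) * b^(n+1) * (b-a) := by ring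
    push_cast
    push_cast at h3
    rw [h4] at h3
    calc b ^ (n+1+1) - a ^ (n+1+1) = b * (b^(n+1) - a^(n+1)) + a^(n+1) * (b - a) := by ring
      _ ≤ (↑n+1) * b^(n+1) * (b-a) + b^(n+1)*(b-a) := by linarith
      _ = (↑n+1+1) * b ^ (n+1) * (b - a) := by ring

lemma key : ∀ m : ℕ, 2 ≤ m → (6*m - 2 : ℝ) < Real.sqrt 2 ^ m * (Real.sqrt 2 + 1)^2 := by
  have e2 : Real.sqrt 2 ^ 2 = (2:ℝ) := by rw [pow_two, s2]
  intro m
  induction m with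
  | zero => intro h; omega
  | succ n ih =>
    intro hn
    rcases Nat.lt_or_ge n 3 with h3 | h3
    · have e3 : Real.sqrt 2 ^ 3 = 2 * Real.sqrt 2 := by
        rw [pow_succ, e2]
      interval_cases n
      · exact absurd hn (by omega)
      · push_cast; nlinarith [h14, e2]
      · push_cast; nlinarith [h14, s2, e3]
    · have ihn := ih (by omega)
      have hstep : Real.sqrt 2 ^ (n+1) * (Real.sqrt 2 + 1)^2
          = Real.sqrt 2 * (Real.sqrt 2 ^ n * (Real.sqrt 2 + 1)^2) := by ring
      have hn3 : (3:ℝ) ≤ n := by exact_mod_cast h3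
      push_cast
      rw [hstep]
      nlinarith [h14, hn3, ihn]
/-- h m a for m = k+2, exponent m-1 = k+1 -/
lemma strict_mono_aux (k : ℕ) {a b : ℝ} (ha : Real.sqrt 2 ≤ a) (hab : a < b) (hb : b ≤ 2) :
    a - 2 + 2 / (a ^ (k+1) * (a+1)) < b - 2 + 2 / (b ^ (k+1) * (b+1)) := by
  have s2pos : (0:ℝ) < Real.sqrt 2 := by linarith [one_lt_sqrt2]
  have ha0 : (0:ℝ) < a := lt_of_lt_of_le s2pos ha
  have hb0 : (0:ℝ) < b := ha0.trans hab
  have hfa : (0:ℝ) < a ^ (k+1) * (a+1) := by positivity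
  have hfb : (0:ℝ) < b ^ (k+1) * (b+1) := by positivity
  set fa := a ^ (k+1) * (a+1) with hfadef
  set fb := b ^ (k+1) * (b+1) with hfbdef
  -- difference of f
  have hd1 : b ^ (k+2) - a ^ (k+2) ≤ (k+2) * b ^ (k+1) * (b-a) := by
    have := pow_sub_pow_le (k+1) ha0.le hab.le
    push_cast at this ⊢; linarith
  have hd2 : b ^ (k+1) - a ^ (k+1) ≤ (k+1) * b ^ k * (b-a) :=
    pow_sub_pow_le k ha0.le hab.le
  have hdiff : fb - fa ≤ (b-a) * (b ^ k * ((k+2)*b + (k+1))) := by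
    have e : fb - fa = (b ^ (k+2) - a ^ (k+2)) + (b ^ (k+1) - a ^ (k+1)) := by
      rw [hfadef, hfbdef]; ring
    have e2 : (k+2) * b ^ (k+1) * (b-a) + (k+1) * b ^ k * (b-a)
        = (b-a) * (b ^ k * ((k+2)*b + (k+1))) := by push_cast; ring
    linarith [hd1, hd2]
  -- key product bound
  have hbound : 2 * ((k+2)*b + (k+1)) < a ^ (k+1) * (a+1) * (b * (b+1)) := by
    have h1 : Real.sqrt 2 ^ (k+1) ≤ a ^ (k+1) := pow_le_pow_left₀ s2pos.le ha _
    have h2 : Real.sqrt 2 + 1 ≤ a + 1 := by linarith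
    have h3 : Real.sqrt 2 * (Real.sqrt 2 + 1) ≤ b * (b+1) := by
      have hsb : Real.sqrt 2 ≤ b := ha.trans hab.le
      have := mul_le_mul hsb (by linarith : Real.sqrt 2 + 1 ≤ b + 1) (by linarith) hb0.le
      linarith
    have h4 : Real.sqrt 2 ^ (k+1) * (Real.sqrt 2 + 1) ≤ a ^ (k+1) * (a+1) :=
      mul_le_mul h1 h2 (by linarith) (by positivity)
    have h5 : Real.sqrt 2 ^ (k+1) * (Real.sqrt 2 + 1) * (Real.sqrt 2 * (Real.sqrt 2 + 1))
        ≤ a ^ (k+1) * (a+1) * (b * (b+1)) :=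
      mul_le_mul h4 h3 (by positivity) (by positivity)
    have h6 : Real.sqrt 2 ^ (k+1) * (Real.sqrt 2 + 1) * (Real.sqrt 2 * (Real.sqrt 2 + 1))
        = Real.sqrt 2 ^ (k+2) * (Real.sqrt 2 + 1)^2 := by ring
    have h7 := key (k+2) (by omega)
    have h8 : 2 * ((k+2)*b + (k+1)) ≤ (6*(k+2) - 2 : ℝ) := by push_cast; nlinarith [hb]
    push_cast at h7 h8 ⊢
    linarith [h5, h6.symm.le, h7, h8]
  have hprod : 2 * ((b-a) * (b ^ k * ((k+2)*b + (k+1)))) < (b-a) * (fa * fb) := by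
    have hba : (0:ℝ) < b - a := by linarith
    have hbk : (0:ℝ) < b ^ k := by positivity
    have := mul_lt_mul_of_pos_left hbound hbk
    have e : fa * fb = b ^ k * (a ^ (k+1) * (a+1) * (b * (b+1))) := by
      rw [hfadef, hfbdef]; ring
    calc 2 * ((b-a) * (b ^ k * ((k+2)*b + (k+1)))) = (b-a) * (2 * (b ^ k * ((k+2)*b + (k+1)))) := by ring
      _ < (b-a) * (fa*fb) := by
          apply mul_lt_mul_of_pos_left _ hba
          rw [e]
          calc 2 * (b ^ k * (((k:ℝ)+2)*b + ((k:ℝ)+1))) = b ^ k * (2 * (((k:ℝ)+2)*b + ((k:ℝ)+1))) := by ring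
            _ < b ^ k * (a ^ (k+1) * (a+1) * (b * (b+1))) := mul_lt_mul_of_pos_left hbound hbk
  -- conclude
  have hfrac : 2/fa - 2/fb = 2*(fb - fa)/(fa*fb) := by
    field_simp
  have hlt : 2*(fb - fa)/(fa*fb) < b - a := by
    rw [div_lt_iff₀ (by positivity)]
    have h9 : 2*(fb - fa) ≤ 2 * ((b-a) * (b ^ k * ((k+2)*b + (k+1)))) := by linarith [hdiff]
    push_cast at h9 hprod ⊢
    nlinarith [h9, hprod]
  have := hfrac ▸ hlt
  linarith [this]def g (m : ℕ) (x : ℝ) : ℝ := x - 2 + 2 / (x ^ (m-1) * (x+1))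

lemma s2pos : (0:ℝ) < Real.sqrt 2 := by linarith [one_lt_sqrt2]

lemma g_sqrt2_base : g 2 (Real.sqrt 2) = 0 := by
  have h1 : Real.sqrt 2 ^ (2-1) * (Real.sqrt 2 + 1) = 2 + Real.sqrt 2 := by
    norm_num; nlinarith [s2]
  have h2 : (0:ℝ) < 2 + Real.sqrt 2 := by linarith [s2pos]
  rw [g, h1]
  field_simp
  nlinarith [s2]

lemma g_cont (m : ℕ) : ContinuousOn (g m) (Set.Icc (Real.sqrt 2) 2) := by
  apply ContinuousOn.add (by fun_prop)
  apply ContinuousOn.div continuousOn_const (by fun_prop)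
  intro x hx
  have hx0 : (0:ℝ) < x := lt_of_lt_of_le s2pos hx.1
  positivity

lemma g_sqrt2_neg (m : ℕ) (hm : 3 ≤ m) : g m (Real.sqrt 2) < 0 := by
  have h1 : Real.sqrt 2 ^ 1 < Real.sqrt 2 ^ (m-1) := by
    apply pow_lt_pow_right₀ one_lt_sqrt2 (by omega)
  have hp1 : (0:ℝ) < Real.sqrt 2 ^ 1 * (Real.sqrt 2 + 1) := by positivity
  have hp2 : (0:ℝ) < Real.sqrt 2 ^ (m-1) * (Real.sqrt 2 + 1) := by positivity
  have h2 : 2 / (Real.sqrt 2 ^ (m-1) * (Real.sqrt 2 + 1)) < 2 / (Real.sqrt 2 ^ 1 * (Real.sqrt 2 + 1)) := by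
    apply div_lt_div_of_pos_left (by norm_num) hp1
    have : (0:ℝ) < Real.sqrt 2 + 1 := by linarith [s2pos]
    exact mul_lt_mul_of_pos_right h1 this
  have h3 := g_sqrt2_base
  rw [g] at h3 ⊢
  simp only [pow_one] at h2
  norm_num at h3 ⊢
  linarith [h2, h3]

lemma g_two_pos (m : ℕ) : 0 < g m 2 := by
  rw [g]
  have : (0:ℝ) < (2:ℝ) ^ (m-1) * (2+1) := by positivity
  have : (0:ℝ) < 2 / ((2:ℝ) ^ (m-1) * (2+1)) := by positivity
  linarith

lemma exists_root (m : ℕ) (hm : 3 ≤ m) :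
    ∃ x ∈ Set.Ioo (Real.sqrt 2) 2, g m x = 0 := by
  have h := intermediate_value_Ioo (le_of_lt sqrt2_lt_two) (g_cont m)
  have h0 : (0:ℝ) ∈ Set.Ioo (g m (Real.sqrt 2)) (g m 2) :=
    ⟨g_sqrt2_neg m hm, g_two_pos m⟩
  obtain ⟨x, hx, hgx⟩ := h h0
  exact ⟨x, hx, hgx⟩

def A : ℕ → ℝ := fun m => if h : 3 ≤ m then (exists_root m h).choose else Real.sqrt 2

lemma A_spec (m : ℕ) (hm : 3 ≤ m) : A m ∈ Set.Ioo (Real.sqrt 2) 2 ∧ g m (A m) = 0 := by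
  rw [A, dif_pos hm]
  obtain ⟨h1, h2⟩ := (exists_root m hm).choose_spec
  exact ⟨h1, h2⟩

lemma A_two : A 2 = Real.sqrt 2 := by rw [A, dif_neg (by omega)]
lemma g_mono (m : ℕ) (hm : 2 ≤ m) {a b : ℝ}
    (ha : Real.sqrt 2 ≤ a) (hab : a < b) (hb : b ≤ 2) : g m a < g m b := by
  obtain ⟨k, rfl⟩ : ∃ k, m = k + 2 := ⟨m-2, by omega⟩
  have := strict_mono_aux k ha hab hb
  simpa [g, show k+2-1 = k+1 from rfl] using this

lemma g_succ_lt (m : ℕ) (hm : 2 ≤ m) {x : ℝ} (hx1 : 1 < x) : g (m+1) x < g m x := by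
  have hx0 : (0:ℝ) < x := by linarith
  have h1 : x ^ (m-1) < x ^ m := pow_lt_pow_right₀ hx1 (by omega)
  have hp1 : (0:ℝ) < x ^ (m-1) * (x+1) := by positivity
  have hp2 : (0:ℝ) < x ^ m * (x+1) := by positivity
  have h2 : 2 / (x ^ m * (x+1)) < 2 / (x ^ (m-1) * (x+1)) := by
    apply div_lt_div_of_pos_left (by norm_num) hp1
    exact mul_lt_mul_of_pos_right h1 (by linarith)
  have e : (m+1)-1 = m := by omega
  rw [g, g, e]
  linarith

lemma A_mono (m : ℕ) (hm : 2 ≤ m) : A m < A (m+1) := by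
  rcases eq_or_lt_of_le hm with h2 | h3
  · subst h2
    rw [A_two]
    exact ((A_spec 3 (by omega)).1).1
  · have hm3 : 3 ≤ m := h3
    obtain ⟨hmem, hroot⟩ := A_spec m hm3
    obtain ⟨hmem', hroot'⟩ := A_spec (m+1) (by omega)
    have h1 : 1 < A m := lt_trans one_lt_sqrt2 hmem.1
    have hneg : g (m+1) (A m) < 0 := by
      have := g_succ_lt m hm h1
      linarith [hroot]
    by_contra hcon
    push_neg at hcon
    rcases eq_or_lt_of_le hcon with he | hl
    · rw [he] at hroot'; linarith
    · have := g_mono (m+1) (by omega) hmem'.1.le hl hmem.2.le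
      linarith [hroot']

lemma A_lower (m : ℕ) (hm : 3 ≤ m) : 2 - 2 / Real.sqrt 2 ^ (m-1) ≤ A m := by
  obtain ⟨hmem, hroot⟩ := A_spec m hm
  have ha0 : (0:ℝ) < A m := lt_trans s2pos hmem.1
  have hD : Real.sqrt 2 ^ (m-1) ≤ (A m) ^ (m-1) * (A m + 1) := by
    have h1 : Real.sqrt 2 ^ (m-1) ≤ (A m) ^ (m-1) := pow_le_pow_left₀ s2pos.le hmem.1.le _
    nlinarith [pow_pos s2pos (m-1), pow_pos ha0 (m-1)]
  have hp : (0:ℝ) < Real.sqrt 2 ^ (m-1) := pow_pos s2pos _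
  have hp2 : (0:ℝ) < (A m) ^ (m-1) * (A m + 1) := by positivity
  have h2 : 2 / ((A m) ^ (m-1) * (A m + 1)) ≤ 2 / Real.sqrt 2 ^ (m-1) :=
    div_le_div_of_nonneg_left (by norm_num) hp hD
  rw [g] at hroot
  linarith

lemma A_tendsto : Filter.Tendsto A Filter.atTop (nhds 2) := by
  have t1 : Filter.Tendsto (fun m : ℕ => Real.sqrt 2 ^ (m-1)) Filter.atTop Filter.atTop :=
    (tendsto_pow_atTop_atTop_of_one_lt one_lt_sqrt2).comp (Filter.tendsto_sub_atTop_nat 1)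
  have t2 : Filter.Tendsto (fun m : ℕ => 2 / Real.sqrt 2 ^ (m-1)) Filter.atTop (nhds 0) :=
    Filter.Tendsto.div_atTop tendsto_const_nhds t1
  have t3 : Filter.Tendsto (fun m : ℕ => 2 - 2 / Real.sqrt 2 ^ (m-1)) Filter.atTop (nhds 2) := by
    have := (tendsto_const_nhds (x := (2:ℝ)) (f := Filter.atTop (α := ℕ))).sub t2
    simpa using this
  apply tendsto_of_tendsto_of_tendsto_of_le_of_le' t3 (tendsto_const_nhds (x := (2:ℝ)))
  · filter_upwards [Filter.eventually_ge_atTop 3] with m hm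
    exact A_lower m hm
  · filter_upwards [Filter.eventually_ge_atTop 3] with m hm
    exact ((A_spec m hm).1).2.le
end TentAux
end

theorem tent_map_geometry :
    let u : ℝ → ℝ := fun a => a - 1
    let r : ℕ → ℝ → ℝ := fun m a => 1 - 2 / (a ^ (m - 1) * (a + 1))
    (∀ a : ℝ, 1 < a → (u a = r 2 a ↔ a = Real.sqrt 2)) ∧
    (∀ a : ℝ, 1 < a → a < Real.sqrt 2 → u a < r 2 a) ∧
    (∀ a : ℝ, 1 < a → (u a = 1 ↔ a = 2)) ∧
    (∃ A : ℕ → ℝ, A 2 = Real.sqrt 2 ∧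
      (∀ m : ℕ, 2 ≤ m → u (A m) = r m (A m)) ∧
      (∀ m : ℕ, 3 ≤ m → A m ∈ Set.Ioo (Real.sqrt 2) 2 ∧
        ∀ x ∈ Set.Ioo (Real.sqrt 2) 2, u x = r m x → x = A m) ∧
      (∀ m : ℕ, 2 ≤ m → A m < A (m + 1)) ∧
      Filter.Tendsto A Filter.atTop (nhds 2)) := by
  open TentAux in
  intro u r
  refine ⟨?_, ?_, ?_, A, A_two, ?_, ?_, A_mono, A_tendsto⟩
  · -- part 1
    intro a ha
    show a - 1 = 1 - 2 / (a ^ (2-1) * (a+1)) ↔ a = Real.sqrt 2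
    have ha0 : (0:ℝ) < a := by linarith
    have hd : a ^ (2-1) * (a+1) = a * (a+1) := by norm_num
    rw [hd]
    constructor
    · intro h
      have hne : a * (a+1) ≠ 0 := by positivity
      field_simp at h
      have hfac : (a - 1) * (a^2 - 2) = 0 := by linear_combination h
      rcases mul_eq_zero.mp hfac with h1 | h1
      · linarith
      · have ha2 : a^2 = 2 := by linarith
        have : Real.sqrt 2 = a := by rw [← ha2]; exact Real.sqrt_sq ha0.le
        exact this.symm
    · rintro rfl
      have h3 := g_sqrt2_base
      rw [g] at h3
      have hd2 : Real.sqrt 2 ^ (2-1) * (Real.sqrt 2 + 1) = Real.sqrt 2 * (Real.sqrt 2 + 1) := by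
        norm_num
      rw [hd2] at h3
      linarith
  · -- part 2
    intro a ha has
    show a - 1 < 1 - 2 / (a ^ (2-1) * (a+1))
    have ha0 : (0:ℝ) < a := by linarith
    have hd : a ^ (2-1) * (a+1) = a * (a+1) := by norm_num
    rw [hd]
    have ha2 : a^2 < 2 := by nlinarith [s2, Real.sqrt_nonneg 2]
    have hkey : 2 / (a * (a+1)) < 2 - a := by
      rw [div_lt_iff₀ (by positivity)]
      nlinarith [mul_pos (sub_pos.2 ha) (sub_pos.2 ha2)]
    linarith
  · -- part 3
    intro a _
    show a - 1 = 1 ↔ a = 2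
    constructor <;> intro h <;> linarith
  · -- root property
    intro m hm
    show A m - 1 = 1 - 2 / (A m ^ (m-1) * (A m + 1))
    rcases eq_or_lt_of_le hm with h2 | h3
    · subst h2
      rw [A_two]
      have h3 := g_sqrt2_base
      rw [g] at h3
      linarith
    · have := (A_spec m h3).2
      rw [g] at this
      linarith
  · -- uniqueness
    intro m hm
    refine ⟨(A_spec m hm).1, ?_⟩
    intro x hx hux
    have hgx : g m x = 0 := by
      rw [g]
      have : x - 1 = 1 - 2 / (x ^ (m-1) * (x+1)) := hux
      linarith
    have hroot := (A_spec m hm).2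
    have hmem := (A_spec m hm).1
    by_contra hne
    rcases lt_or_gt_of_ne hne with hl | hl
    · have := g_mono m (by omega) hx.1.le hl hmem.2.le
      rw [hgx, hroot] at this; exact lt_irrefl 0 this
    · have := g_mono m (by omega) hmem.1.le hl hx.2.le
      rw [hgx, hroot] at this; exact lt_irrefl 0 this
end

section
/- Suppose a > 3b + 1 and 0 ≤ b ≤ 1, and define λ = (a + √(a² − 4b))/2, u_∞ = λ − 1, and r₂ = the x-coordinate determined by the formula r₂ = [(1 − s₂/λ)(1 + 1/(λ+1)) − b/λ]·(λ−1)/(a + s₂) with s₂ ∈ [−b/λ, b/λ]. If a < √2(1 − 3b), then u_∞ < r₂. -/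
set_option maxHeartbeats 1000000

theorem lozi_period_doubling_renormalizable (a b : ℝ) (hab : a > 3 * b + 1) (hb0 : 0 ≤ b)
    (hb1 : b ≤ 1) (ha : a < Real.sqrt 2 * (1 - 3 * b)) :
    let l := (a + Real.sqrt (a ^ 2 - 4 * b)) / 2
    ∀ s₂ ∈ Set.Icc (-(b / l)) (b / l),
      l - 1 < ((1 - s₂ / l) * (1 + 1 / (l + 1)) - b / l) * (l - 1) / (a + s₂) := by
  intro l s₂ hs₂
  have hldef : l = (a + Real.sqrt (a ^ 2 - 4 * b)) / 2 := rfl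
  clear_value l
  obtain ⟨hs₂l, hs₂u⟩ := hs₂
  have ha1 : 1 < a := by linarith
  have hr : Real.sqrt 2 ^ 2 = 2 := Real.sq_sqrt (by norm_num)
  have hr0 : 0 < Real.sqrt 2 := Real.sqrt_pos.mpr (by norm_num)
  have hrlb : (1.41 : ℝ) < Real.sqrt 2 := by nlinarith
  have hrub : Real.sqrt 2 < 1.42 := by nlinarith
  have h3b : 1 - 3 * b > 0 := by nlinarith
  have hb6 : b < 1 / 6 := by nlinarith
  have haub : a < 2 := by nlinarith
  have h4b : 0 ≤ a ^ 2 - 4 * b := by nlinarith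
  have hsnn : 0 ≤ Real.sqrt (a ^ 2 - 4 * b) := Real.sqrt_nonneg _
  have hseq : Real.sqrt (a ^ 2 - 4 * b) = 2 * l - a := by rw [hldef]; ring
  have hsq : (2 * l - a) ^ 2 = a ^ 2 - 4 * b := by rw [← hseq]; exact Real.sq_sqrt h4b
  have hha : 0 ≤ 2 * l - a := hseq ▸ hsnn
  have hl2 : l ^ 2 = a * l - b := by linear_combination hsq / 4
  have hl1 : 1 < l := by nlinarith [hl2, hha, haub]
  have hl0 : 0 < l := by linarith
  have hla : l ≤ a := by
    have h1 : Real.sqrt (a ^ 2 - 4 * b) ≤ Real.sqrt (a ^ 2) :=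
      Real.sqrt_le_sqrt (by nlinarith)
    have h2 : Real.sqrt (a ^ 2) = a := by
      rw [Real.sqrt_sq (by linarith : (0:ℝ) ≤ a)]
    rw [hseq, h2] at h1; linarith
  have hlt : l < Real.sqrt 2 * (1 - 3 * b) := lt_of_le_of_lt hla ha
  have hlsq : l ^ 2 < 2 * (1 - 3 * b) ^ 2 := by nlinarith [hlt, hl0, hr, hr0]
  have hsu : s₂ * l ≤ b := by rw [← le_div_iff₀ hl0]; exact hs₂u
  have hsb : s₂ ≤ b := le_trans hs₂u (div_le_self hb0 hl1.le)
  have hsl : -b ≤ s₂ := by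
    have := div_le_self hb0 hl1.le
    linarith
  have has : 0 < a + s₂ := by linarith
  have hl1' : 0 < l + 1 := by linarith
  have hlne : l ≠ 0 := ne_of_gt hl0
  have hl1ne : l + 1 ≠ 0 := ne_of_gt hl1'
  have heq : ((1 - s₂ / l) * (1 + 1 / (l + 1)) - b / l)
      = ((l - s₂) * (l + 2) - b * (l + 1)) / (l * (l + 1)) := by
    field_simp; ring
  rw [heq, lt_div_iff₀ has, div_mul_eq_mul_div, lt_div_iff₀ (mul_pos hl0 hl1')]
  have hQ : l ^ 3 + 2 * b * l + 2 * b - 2 * l + s₂ * (l ^ 2 + 2 * l + 2) < 0 := by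
    nlinarith [mul_pos hl0 (sub_pos.mpr hlsq), mul_nonneg (sub_nonneg.mpr hsu) hl0.le,
      mul_nonneg (sub_nonneg.mpr hsb) hb0,
      mul_nonneg (sub_pos.mpr hl1).le (by nlinarith : (0:ℝ) ≤ 9 - 18 * b),
      mul_nonneg hb0 (by nlinarith : (0:ℝ) ≤ 3 - 18 * b), sub_nonneg.mpr hsb]
  nlinarith [mul_pos (sub_pos.mpr hl1) (neg_pos.mpr hQ), hl2]
end

section
/- Suppose a > 3b + 1 and 0 ≤ b ≤ 1, λ = (a + √(a² − 4b))/2, μ = b/λ. Define h(s) = (b + 2s)/(a + s). Then for all s ∈ [−μ, μ], h'(s) = (2a − b)/(a + s)² ≤ (9/4)/λ. -/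
theorem lozi_remaining_term_bound (a b : ℝ) (hab : a > 3 * b + 1) (hb0 : 0 ≤ b) (hb1 : b ≤ 1) :
    let l := (a + Real.sqrt (a ^ 2 - 4 * b)) / 2
    let μ := b / l
    ∀ s ∈ Set.Icc (-μ) μ, (2 * a - b) / (a + s) ^ 2 ≤ (9 / 4) / l := by
  intro l μ s hs
  have ha1 : a > 1 := by nlinarith
  have hd2 : a ^ 2 - 4 * b ≥ 0 := by nlinarith
  have hd : Real.sqrt (a ^ 2 - 4 * b) ≥ 0 := Real.sqrt_nonneg _
  have hdsq : (Real.sqrt (a ^ 2 - 4 * b)) ^ 2 = a ^ 2 - 4 * b := Real.sq_sqrt hd2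
  have hl : l ≥ a / 2 := by
    show (a + Real.sqrt (a ^ 2 - 4 * b)) / 2 ≥ a / 2
    nlinarith
  have hlpos : 0 < l := by nlinarith
  have hleq : l ^ 2 = a * l - b := by
    show ((a + Real.sqrt (a ^ 2 - 4 * b)) / 2) ^ 2 = a * ((a + Real.sqrt (a ^ 2 - 4 * b)) / 2) - b
    field_simp
    nlinarith [hdsq]
  have hl8 : l ^ 2 ≥ 8 * b := by
    have hA : (3 * b + 1) * l < a * l := by
      exact mul_lt_mul_of_pos_right hab hlpos
    have h4 : 3 * l - 1 > 0 := by nlinarith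
    nlinarith [hA, h4, mul_nonneg hlpos.le (sq_nonneg (2 * l - 3)), hlpos, hleq]
  have hμ : μ = b / l := rfl
  have hsl : a + s ≥ l := by
    have h1 : s ≥ -(b / l) := by rw [hμ] at hs; exact hs.1
    have h2 : a - b / l = l := by
      field_simp
      nlinarith
    nlinarith [h1, h2]
  have hsq : (a + s) ^ 2 ≥ l ^ 2 := by nlinarith
  have haspos : 0 < (a + s) ^ 2 := by nlinarith
  rw [div_le_div_iff₀ haspos hlpos]
  nlinarith [mul_nonneg hb0 hlpos.le]
end

section
/- Suppose a > 3b + 1 and 0 ≤ b ≤ 1, λ = (a + √(a² − 4b))/2. For the logistic-type convergence factor: there is a constant c = (64/7)·ln 2 < 6.4 such that for every σ ∈ {−1,+1}, every s ∈ [−1/λ, 1/λ], and every m ≥ 1, setting s_m = f_σ^m(s) with f_σ(t) = −1/(bt + σa) and s_∞ = −σ/λ, one has (1 − c·b/λ²)·(b/λ²)^m·|s − s_∞| ≤ |s_m − s_∞| ≤ (b/λ²)^m·|s − s_∞|. -/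
set_option maxHeartbeats 1000000

private lemma lozi_step_arith (q p e0 e e' : ℝ) (hq0 : 0 ≤ q) (hq8 : q ≤ 1/8)
    (hp0 : 0 ≤ p) (hp1 : p ≤ 1) (he00 : 0 ≤ e0) (he'_nn : 0 ≤ e')
    (hlo : p * e0 * (1 - (16/7) * q * (1 - p)) ≤ e)
    (hstep : q * e ≤ e' * (1 + 2 * (q * p))) :
    (q * p) * e0 * (1 - (16/7) * q * (1 - q * p)) ≤ e' := by
  have hx0 : 0 ≤ 2 * (q * p) := by positivity
  have hx1 : 2 * (q * p) ≤ 1 := by nlinarith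
  have hstep2 : q * e * (1 - 2 * (q * p)) ≤ e' := by
    have h4 := mul_le_mul_of_nonneg_right hstep (by linarith : (0:ℝ) ≤ 1 - 2 * (q * p))
    nlinarith [h4, mul_nonneg he'_nn (sq_nonneg (2 * (q * p)))]
  have hmul : q * (p * e0 * (1 - (16/7) * q * (1 - p))) * (1 - 2 * (q * p)) ≤
      q * e * (1 - 2 * (q * p)) := by
    have h5 := mul_le_mul_of_nonneg_right
      (mul_le_mul_of_nonneg_left hlo hq0) (by linarith : (0:ℝ) ≤ 1 - 2 * (q * p))
    linarith
  have hbr : 0 ≤ 2/7 + (16/7) * q * (1 - 2 * p) := by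
    nlinarith [mul_nonneg hq0 (by linarith : (0:ℝ) ≤ 1 - p)]
  have hid : q * (p * e0 * (1 - (16/7) * q * (1 - p))) * (1 - 2 * (q * p)) -
      (q * p) * e0 * (1 - (16/7) * q * (1 - q * p)) =
      e0 * (q * p) ^ 2 * (2/7 + (16/7) * q * (1 - 2 * p)) := by ring
  have hnn : 0 ≤ e0 * (q * p) ^ 2 * (2/7 + (16/7) * q * (1 - 2 * p)) :=
    mul_nonneg (mul_nonneg he00 (sq_nonneg _)) hbr
  linarith

private lemma lozi_final_arith (q p e0 c : ℝ) (hq0 : 0 ≤ q) (hp0 : 0 ≤ p)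
    (he00 : 0 ≤ e0) (hcge : 16/7 ≤ c) :
    (1 - c * q) * p * e0 ≤ p * e0 * (1 - (16/7) * q * (1 - p)) := by
  have hid : p * e0 * (1 - (16/7) * q * (1 - p)) - (1 - c * q) * p * e0 =
      p * e0 * q * ((c - 16/7) + (16/7) * p) := by ring
  have hnn : 0 ≤ p * e0 * q * ((c - 16/7) + (16/7) * p) := by
    apply mul_nonneg (mul_nonneg (mul_nonneg hp0 he00) hq0)
    have h6 : 0 ≤ (16/7 : ℝ) * p := by positivity
    linarith
  linarith

theorem lozi_exponential_convergence_of_slope (a b : ℝ) (hab : a > 3 * b + 1) (hb0 : 0 ≤ b)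
    (hb1 : b ≤ 1) :
    let l := (a + Real.sqrt (a ^ 2 - 4 * b)) / 2
    let c : ℝ := (64 / 7) * Real.log 2
    c < 6.4 ∧
    ∀ σ : ℝ, (σ = -1 ∨ σ = 1) →
      ∀ s ∈ Set.Icc (-(1 / l)) (1 / l), ∀ m : ℕ, 1 ≤ m →
        (1 - c * (b / l ^ 2)) * (b / l ^ 2) ^ m * |s - (-σ / l)| ≤
          |(fun t : ℝ => -1 / (b * t + σ * a))^[m] s - (-σ / l)| ∧
        |(fun t : ℝ => -1 / (b * t + σ * a))^[m] s - (-σ / l)| ≤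
          (b / l ^ 2) ^ m * |s - (-σ / l)| := by
  intro l c
  have ha1 : 1 < a := by nlinarith
  have ha0 : 0 < a := by linarith
  have hD : 0 < a ^ 2 - 4 * b := by nlinarith
  have hsq : Real.sqrt (a ^ 2 - 4 * b) ^ 2 = a ^ 2 - 4 * b := Real.sq_sqrt hD.le
  have hsD : 0 < Real.sqrt (a ^ 2 - 4 * b) := Real.sqrt_pos.mpr hD
  have hl_def : l = (a + Real.sqrt (a ^ 2 - 4 * b)) / 2 := rfl
  have hl2 : l ^ 2 = a * l - b := by rw [hl_def]; nlinarith [hsq]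
  have hla : a / 2 ≤ l := by rw [hl_def]; linarith
  have hl_pos : 0 < l := by linarith
  have h81 : 81 * b < 8 * a ^ 2 := by nlinarith [sq_nonneg (12 * b - 5)]
  have hal : 9 * b < a * l := by
    rcases le_or_gt (18 * b) (a ^ 2) with h | h
    · nlinarith [mul_pos ha0 hsD]
    · have hb' : 0 < b := by nlinarith
      have hX : 0 < a * Real.sqrt (a ^ 2 - 4 * b) := mul_pos ha0 hsD
      have hX2 : (a * Real.sqrt (a ^ 2 - 4 * b)) ^ 2 = a ^ 2 * (a ^ 2 - 4 * b) := by
        rw [mul_pow, hsq]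
      have hgt : 18 * b - a ^ 2 < a * Real.sqrt (a ^ 2 - 4 * b) := by
        nlinarith [hX2, sq_nonneg (a * Real.sqrt (a ^ 2 - 4 * b) + (18 * b - a ^ 2))]
      rw [hl_def]; nlinarith
  have h8 : 8 * b < l ^ 2 := by nlinarith
  have hq0 : 0 ≤ b / l ^ 2 := by positivity
  have hq8 : b / l ^ 2 ≤ 1 / 8 := by
    rw [div_le_div_iff₀ (by positivity) (by norm_num)]
    linarith
  have hc64 : c < 6.4 := by
    have := Real.log_two_lt_d9
    show (64 / 7) * Real.log 2 < 6.4
    nlinarith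
  have hcge : 16 / 7 ≤ c := by
    have := Real.log_two_gt_d9
    show 16 / 7 ≤ (64 / 7) * Real.log 2
    nlinarith
  refine ⟨hc64, ?_⟩
  intro σ hσ s hs m hm
  have hσ2 : σ ^ 2 = 1 := by rcases hσ with h | h <;> rw [h] <;> norm_num
  have hσ1 : |σ| = 1 := by rcases hσ with h | h <;> rw [h] <;> simp
  have ha : a = l + b / l := by field_simp; nlinarith [hl2]
  -- key step lemma
  have key : ∀ t ∈ Set.Icc (-(1/l)) (1/l),
      ((fun t : ℝ => -1 / (b * t + σ * a)) t ∈ Set.Icc (-(1/l)) (1/l)) ∧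
      |(fun t : ℝ => -1 / (b * t + σ * a)) t - (-σ/l)| ≤ (b/l^2) * |t - (-σ/l)| ∧
      (b/l^2) * |t - (-σ/l)| ≤
        |(fun t : ℝ => -1 / (b * t + σ * a)) t - (-σ/l)| * (1 + (b/l) * |t - (-σ/l)|) := by
    intro t ht
    simp only [Set.mem_Icc] at ht
    have htabs : |t| ≤ 1 / l := abs_le.mpr ht
    have hbt : |σ * (b * t)| ≤ b / l := by
      rw [abs_mul, hσ1, one_mul, abs_mul, abs_of_nonneg hb0]
      calc b * |t| ≤ b * (1/l) := mul_le_mul_of_nonneg_left htabs hb0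
        _ = b / l := by ring
    have hd_lb : l ≤ a + σ * (b * t) := by
      have h1 := neg_abs_le (σ * (b * t))
      have hbll : a - l = b / l := by rw [ha]; ring
      linarith [hbt]
    have hd_pos : 0 < a + σ * (b * t) := lt_of_lt_of_le hl_pos hd_lb
    have hne : b * t + σ * a ≠ 0 := by
      intro h
      have h2 : σ * (b * t + σ * a) = 0 := by rw [h]; ring
      have h3 : a + σ * (b * t) = 0 := by nlinarith [h2, hσ2]
      linarith
    have habs_d : |b * t + σ * a| = a + σ * (b * t) := by
      have h1 : |b * t + σ * a| = |σ * (b * t + σ * a)| := by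
        rw [abs_mul, hσ1, one_mul]
      rw [h1]
      have h2 : σ * (b * t + σ * a) = a + σ * (b * t) := by nlinarith [hσ2]
      rw [h2, abs_of_pos hd_pos]
    have hident : -1 / (b * t + σ * a) - (-σ/l) =
        σ * b * (t - (-σ/l)) / (l * (b * t + σ * a)) := by
      field_simp
      linear_combination (a*l - b) * hσ2 - hl2
    have habs : |(-1 / (b * t + σ * a)) - (-σ/l)| =
        b * |t - (-σ/l)| / (l * (a + σ * (b * t))) := by
      rw [hident, abs_div, abs_mul, abs_mul, hσ1, one_mul, abs_of_nonneg hb0,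
        abs_mul, abs_of_pos hl_pos, habs_d]
    refine ⟨?_, ?_, ?_⟩
    · simp only [Set.mem_Icc]
      have h1 : |(-1 : ℝ) / (b * t + σ * a)| = 1 / (a + σ * (b * t)) := by
        rw [abs_div, abs_neg, abs_one, habs_d]
      have h2 : (1:ℝ) / (a + σ * (b * t)) ≤ 1 / l :=
        one_div_le_one_div_of_le hl_pos hd_lb
      exact abs_le.mp (le_trans (le_of_eq h1) h2)
    · simp only []
      rw [habs]
      have h1 : l * l ≤ l * (a + σ * (b * t)) := mul_le_mul_of_nonneg_left hd_lb hl_pos.le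
      calc b * |t - (-σ/l)| / (l * (a + σ * (b * t)))
          ≤ b * |t - (-σ/l)| / (l * l) :=
            div_le_div_of_nonneg_left (by positivity) (by positivity) h1
        _ = (b/l^2) * |t - (-σ/l)| := by rw [pow_two]; ring
    · simp only []
      rw [habs]
      have hub : a + σ * (b * t) ≤ l + b * |t - (-σ/l)| := by
        have h1 : a + σ * (b * t) = l + b * (σ * (t - (-σ/l))) := by
          rw [ha]; field_simp; nlinarith [hσ2]
        have h2 : σ * (t - (-σ/l)) ≤ |t - (-σ/l)| := by
          calc σ * (t - (-σ/l)) ≤ |σ * (t - (-σ/l))| := le_abs_self _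
            _ = |t - (-σ/l)| := by rw [abs_mul, hσ1, one_mul]
        nlinarith [h1, h2]
      have hdne : (a + σ * (b * t)) ≠ 0 := hd_pos.ne'
      have h3 : (a + σ * (b * t)) / l ≤ 1 + (b/l) * |t - (-σ/l)| := by
        rw [div_le_iff₀ hl_pos]
        calc a + σ * (b * t) ≤ l + b * |t - (-σ/l)| := hub
          _ = (1 + (b/l) * |t - (-σ/l)|) * l := by field_simp
      calc (b/l^2) * |t - (-σ/l)|
          = (b * |t - (-σ/l)| / (l * (a + σ * (b * t)))) * ((a + σ * (b * t)) / l) := by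
            generalize |t - (-σ/l)| = X; have hl0 : l ≠ 0 := hl_pos.ne'; rw [pow_two]; field_simp; rw [mul_div_assoc, div_self (by convert hdne using 1; ring), mul_one]
        _ ≤ (b * |t - (-σ/l)| / (l * (a + σ * (b * t)))) * (1 + (b/l) * |t - (-σ/l)|) := by
            apply mul_le_mul_of_nonneg_left h3 (by positivity)
  -- bound on |s - s∞|
  simp only [Set.mem_Icc] at hs
  have hsabs : |s| ≤ 1 / l := abs_le.mpr hs
  have hsinf : |(-σ/l : ℝ)| = 1 / l := by
    rw [abs_div, abs_neg, hσ1, abs_of_pos hl_pos]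
  have he0 : |s - (-σ/l)| ≤ 2 / l := by
    calc |s - (-σ/l)| ≤ |s| + |(-σ/l : ℝ)| := abs_sub _ _
      _ ≤ 1 / l + 1 / l := by rw [hsinf]; linarith
      _ = 2 / l := by ring
  have he00 : 0 ≤ |s - (-σ/l)| := abs_nonneg _
  -- main induction
  have main : ∀ n : ℕ, ((fun t : ℝ => -1 / (b * t + σ * a))^[n] s ∈ Set.Icc (-(1/l)) (1/l)) ∧
      |(fun t : ℝ => -1 / (b * t + σ * a))^[n] s - (-σ/l)| ≤ (b/l^2)^n * |s - (-σ/l)| ∧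
      (b/l^2)^n * |s - (-σ/l)| * (1 - (16/7) * (b/l^2) * (1 - (b/l^2)^n)) ≤
        |(fun t : ℝ => -1 / (b * t + σ * a))^[n] s - (-σ/l)| := by
    intro n
    induction n with
    | zero =>
      refine ⟨by simpa using Set.mem_Icc.mpr hs, by simp, by simp⟩
    | succ n ih =>
      obtain ⟨hmem, hup, hlo⟩ := ih
      obtain ⟨hmem', hup', hlo'⟩ := key _ hmem
      have hiter : (fun t : ℝ => -1 / (b * t + σ * a))^[n+1] s =
          (fun t : ℝ => -1 / (b * t + σ * a)) ((fun t : ℝ => -1 / (b * t + σ * a))^[n] s) :=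
        Function.iterate_succ_apply' _ _ _
      rw [← hiter] at hmem' hup' hlo'
      set q : ℝ := b / l ^ 2 with hq_def
      set u : ℝ := (fun t : ℝ => -1 / (b * t + σ * a))^[n] s with hu_def
      set u' : ℝ := (fun t : ℝ => -1 / (b * t + σ * a))^[n+1] s with hu'_def
      set e0 : ℝ := |s - (-σ/l)| with he0_def
      set e : ℝ := |u - (-σ/l)| with he_def
      set e' : ℝ := |u' - (-σ/l)| with he'_def
      have he_nn : 0 ≤ e := abs_nonneg _
      have he'_nn : 0 ≤ e' := abs_nonneg _
      have hp0 : 0 ≤ q ^ n := pow_nonneg hq0 n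
      have hp1 : q ^ n ≤ 1 := pow_le_one₀ hq0 (by linarith)
      refine ⟨hmem', ?_, ?_⟩
      · calc e' ≤ q * e := hup'
          _ ≤ q * (q ^ n * e0) := mul_le_mul_of_nonneg_left hup hq0
          _ = q ^ (n+1) * e0 := by ring
      · -- lower bound
        -- (b/l) * e ≤ 2 * q^(n+1)
        have hble : (b/l) * e ≤ 2 * q ^ (n+1) := by
          have h1 : (b/l) * e ≤ (b/l) * (q ^ n * e0) :=
            mul_le_mul_of_nonneg_left hup (by positivity)
          have h2 : (b/l) * (q ^ n * e0) ≤ (b/l) * (q ^ n * (2/l)) := by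
            apply mul_le_mul_of_nonneg_left _ (by positivity)
            exact mul_le_mul_of_nonneg_left he0 hp0
          have h3 : (b/l) * (q ^ n * (2/l)) = 2 * q ^ (n+1) := by
            have hl0 : l ≠ 0 := hl_pos.ne'; rw [hq_def]; rw [pow_succ]; field_simp; have hk : l ^ 2 * (b / l ^ 2) = b := by field_simp
            rw [pow_succ]; linear_combination (-(b / l ^ 2) ^ n) * hk
          linarith
        -- q * e ≤ e' * (1 + 2*q^(n+1))
        have hstep : q * e ≤ e' * (1 + 2 * q ^ (n+1)) := by
          calc q * e ≤ e' * (1 + (b/l) * e) := hlo'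
            _ ≤ e' * (1 + 2 * q ^ (n+1)) := by
                apply mul_le_mul_of_nonneg_left _ he'_nn
                linarith
        have hpn : q ^ (n+1) = q * q ^ n := pow_succ' q n
        rw [hpn] at hstep ⊢
        exact lozi_step_arith q (q ^ n) e0 e e' hq0 hq8 hp0 hp1 he00 he'_nn hlo hstep
  obtain ⟨hmem, hup, hlo⟩ := main m
  constructor
  · -- lower bound with c
    have hp0 : 0 ≤ (b/l^2) ^ m := pow_nonneg hq0 m
    have h1 := lozi_final_arith (b/l^2) ((b/l^2)^m) (|s - (-σ/l)|) c hq0 hp0 he00 hcge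
    linarith
  · exact hup
end
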